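/- arXiv:2209.13567 — 3 statements merged into one kernel-verified Lean document; each statement's English description precedes it below -/
import Mathlib

section
/- Let P₁, P₂, P₃ be three points of ℙ¹×ℙ¹ such that no two of them have the same first ℙ¹-coordinate and no two of them have the same second ℙ¹-coordinate. Then the vector space of bihomogeneous polynomials of bidegree (1,1) in ℂ[X₀,X₁,Y₀,Y₁] vanishing at P₁, P₂, P₃ is one-dimensional, and every nonzero element of this space is irreducible in ℂ[X₀,X₁,Y₀,Y₁]. -/
open MvPolynomial

noncomputable section

/-- The polynomial ring ℂ[X₀,X₁,Y₀,Y₁], with variables indexed `0 ↦ X₀, 1 ↦ X₁, 2 ↦ Y₀, 3 ↦ Y₁`. -/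
abbrev C4 : Type := MvPolynomial (Fin 4) ℂ

/-- Evaluate `P ∈ ℂ[X₀,X₁,Y₀,Y₁]` at representatives `v = (x₀,x₁)`, `w = (y₀,y₁)`. -/
def evalP (P : C4) (v w : ℂ × ℂ) : ℂ := eval ![v.1, v.2, w.1, w.2] P

/-- `P` is bihomogeneous of bidegree `(m,n)`: every monomial `X₀^i X₁^j Y₀^k Y₁^l`
occurring in `P` satisfies `i + j = m` and `k + l = n`. -/
def IsBihom (m n : ℕ) (P : C4) : Prop :=
  ∀ d ∈ P.support, d 0 + d 1 = m ∧ d 2 + d 3 = n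

/-! ### Elementary 2-dimensional linear algebra over ℂ -/

lemma det_ne_of_not_prop (u v : ℂ × ℂ) (hu : u ≠ 0) (h : ¬ ∃ t : ℂ, v = t • u) :
    u.1 * v.2 - u.2 * v.1 ≠ 0 := by
  intro hd
  apply h
  have hne : u.1 ≠ 0 ∨ u.2 ≠ 0 := by
    by_contra hcon
    push_neg at hcon
    exact hu (Prod.ext hcon.1 hcon.2)
  rcases hne with h1 | h2
  · refine ⟨v.1 / u.1, Prod.ext ?_ ?_⟩
    · simp only [Prod.smul_fst, smul_eq_mul]; field_simp
    · simp only [Prod.smul_snd, smul_eq_mul]; field_simp; linear_combination hd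
  · refine ⟨v.2 / u.2, Prod.ext ?_ ?_⟩
    · simp only [Prod.smul_fst, smul_eq_mul]; field_simp; linear_combination -hd
    · simp only [Prod.smul_snd, smul_eq_mul]; field_simp

lemma ker2' (A B P Q : ℂ) (h : ¬(A = 0 ∧ B = 0)) (hrel : A * P + B * Q = 0) :
    ∃ t : ℂ, P = t * B ∧ Q = -(t * A) := by
  rcases not_and_or.1 h with hA | hB
  · refine ⟨-Q / A, ?_, ?_⟩
    · field_simp
      linear_combination hrel
    · field_simp
  · refine ⟨P / B, ?_, ?_⟩
    · field_simp
    · field_simp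
      linear_combination hrel

lemma indep2' (α β v1 v2 w1 w2 : ℂ) (h1 : α * v1 + β * w1 = 0) (h2 : α * v2 + β * w2 = 0)
    (hd : v1 * w2 - v2 * w1 ≠ 0) : α = 0 ∧ β = 0 := by
  constructor
  · have h3 : α * (v1 * w2 - v2 * w1) = 0 := by linear_combination w2 * h1 - w1 * h2
    exact (mul_eq_zero.1 h3).resolve_right hd
  · have h3 : β * (v1 * w2 - v2 * w1) = 0 := by linear_combination (-v2) * h1 + v1 * h2
    exact (mul_eq_zero.1 h3).resolve_right hd

/-! ### Normal forms for bidegree (1,1) and total degree ≤ 1 polynomials -/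

def E (i j : Fin 4) : Fin 4 →₀ ℕ := Finsupp.single i 1 + Finsupp.single j 1

lemma E_apply (i j k : Fin 4) : E i j k = (if i = k then 1 else 0) + (if j = k then 1 else 0) := by
  simp [E, Finsupp.single_apply]

lemma mono_class (m : Fin 4 →₀ ℕ) (h1 : m 0 + m 1 = 1) (h2 : m 2 + m 3 = 1) :
    m = E 0 2 ∨ m = E 0 3 ∨ m = E 1 2 ∨ m = E 1 3 := by
  have c1 : (m 0 = 1 ∧ m 1 = 0) ∨ (m 0 = 0 ∧ m 1 = 1) := by omega
  have c2 : (m 2 = 1 ∧ m 3 = 0) ∨ (m 2 = 0 ∧ m 3 = 1) := by omega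
  rcases c1 with ⟨ha, hb⟩ | ⟨ha, hb⟩ <;> rcases c2 with ⟨hc, hd⟩ | ⟨hc, hd⟩
  · exact Or.inl (by ext k; fin_cases k <;> simp_all [E_apply])
  · exact Or.inr (Or.inl (by ext k; fin_cases k <;> simp_all [E_apply]))
  · exact Or.inr (Or.inr (Or.inl (by ext k; fin_cases k <;> simp_all [E_apply])))
  · exact Or.inr (Or.inr (Or.inr (by ext k; fin_cases k <;> simp_all [E_apply])))

def Qform (p q r s : ℂ) : C4 :=
  monomial (E 0 2) p + monomial (E 0 3) q + monomial (E 1 2) r + monomial (E 1 3) s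

lemma Qform_eq (p q r s : ℂ) :
    Qform p q r s = C p * X 0 * X 2 + C q * X 0 * X 3 + C r * X 1 * X 2 + C s * X 1 * X 3 := by
  have h : ∀ (i j : Fin 4) (z : ℂ), (C z * X i * X j : C4) = monomial (E i j) z := by
    intro i j z
    rw [X, X, C_mul_monomial, monomial_mul, E]
    simp
  rw [Qform, h, h, h, h]

lemma bihom_rep (Q : C4) (h : IsBihom 1 1 Q) : ∃ p q r s : ℂ, Q = Qform p q r s := by
  refine ⟨coeff (E 0 2) Q, coeff (E 0 3) Q, coeff (E 1 2) Q, coeff (E 1 3) Q, ?_⟩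
  ext m
  rw [Qform]
  simp only [coeff_add, coeff_monomial]
  by_cases hm : m 0 + m 1 = 1 ∧ m 2 + m 3 = 1
  · rcases mono_class m hm.1 hm.2 with rfl | rfl | rfl | rfl <;>
      · rw [if_pos rfl]
        rw [if_neg, if_neg, if_neg] <;> try ring
        all_goals (intro hE; have := DFunLike.congr_fun hE (0 : Fin 4);
                   have h2 := DFunLike.congr_fun hE (1 : Fin 4);
                   have h3 := DFunLike.congr_fun hE (2 : Fin 4);
                   simp [E_apply] at this h2 h3)
  · have h0 : coeff m Q = 0 := by
      by_contra hc
      exact hm (h m (mem_support_iff.2 hc))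
    rw [h0]
    rw [if_neg, if_neg, if_neg, if_neg] <;> try ring
    all_goals (rintro rfl; exact hm (by constructor <;> simp [E_apply]))

lemma degsum (d : Fin 4 →₀ ℕ) : (d.sum fun _ e => e) = d 0 + d 1 + d 2 + d 3 := by
  rw [Finsupp.sum_fintype _ _ (fun _ => rfl), Fin.sum_univ_four]

def Lform (a : Fin 5 → ℂ) : C4 :=
  monomial 0 (a 0) + monomial (Finsupp.single 0 1) (a 1) + monomial (Finsupp.single 1 1) (a 2)
    + monomial (Finsupp.single 2 1) (a 3) + monomial (Finsupp.single 3 1) (a 4)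

lemma Lform_eq (a : Fin 5 → ℂ) :
    Lform a = C (a 0) + C (a 1) * X 0 + C (a 2) * X 1 + C (a 3) * X 2 + C (a 4) * X 3 := by
  have h : ∀ (i : Fin 4) (z : ℂ), (C z * X i : C4) = monomial (Finsupp.single i 1) z := by
    intro i z
    rw [X, C_mul_monomial]
    simp
  rw [Lform, h, h, h, h, C_apply]

lemma lin_class (m : Fin 4 →₀ ℕ) (h : m 0 + m 1 + m 2 + m 3 ≤ 1) :
    m = 0 ∨ m = Finsupp.single 0 1 ∨ m = Finsupp.single 1 1 ∨
      m = Finsupp.single 2 1 ∨ m = Finsupp.single 3 1 := by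
  have c : (m 0 = 0 ∧ m 1 = 0 ∧ m 2 = 0 ∧ m 3 = 0) ∨ (m 0 = 1 ∧ m 1 = 0 ∧ m 2 = 0 ∧ m 3 = 0)
      ∨ (m 0 = 0 ∧ m 1 = 1 ∧ m 2 = 0 ∧ m 3 = 0) ∨ (m 0 = 0 ∧ m 1 = 0 ∧ m 2 = 1 ∧ m 3 = 0)
      ∨ (m 0 = 0 ∧ m 1 = 0 ∧ m 2 = 0 ∧ m 3 = 1) := by omega
  rcases c with h' | h' | h' | h' | h'
  · exact Or.inl (by ext k; fin_cases k <;> simp_all)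
  · exact Or.inr (Or.inl (by ext k; fin_cases k <;> simp_all [Finsupp.single_apply]))
  · exact Or.inr (Or.inr (Or.inl (by ext k; fin_cases k <;> simp_all [Finsupp.single_apply])))
  · exact Or.inr (Or.inr (Or.inr (Or.inl
      (by ext k; fin_cases k <;> simp_all [Finsupp.single_apply]))))
  · exact Or.inr (Or.inr (Or.inr (Or.inr
      (by ext k; fin_cases k <;> simp_all [Finsupp.single_apply]))))

lemma lin_rep (A : C4) (h : A.totalDegree ≤ 1) : ∃ a : Fin 5 → ℂ, A = Lform a := by
  refine ⟨![coeff 0 A, coeff (Finsupp.single 0 1) A, coeff (Finsupp.single 1 1) A,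
    coeff (Finsupp.single 2 1) A, coeff (Finsupp.single 3 1) A], ?_⟩
  ext m
  rw [Lform]
  simp only [coeff_add, coeff_monomial, Matrix.cons_val_zero, Matrix.cons_val_one,
    Matrix.head_cons, Matrix.cons_val_two, Matrix.tail_cons, Matrix.cons_val_three,
    Matrix.cons_val_four]
  by_cases hm : m 0 + m 1 + m 2 + m 3 ≤ 1
  · rcases lin_class m hm with rfl | rfl | rfl | rfl | rfl <;>
      · rw [if_pos rfl]
        rw [if_neg, if_neg, if_neg, if_neg] <;> try ring
        all_goals
          intro hE
          rw [Finsupp.ext_iff] at hE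
          have h0 := hE 0
          have h1 := hE 1
          have h2 := hE 2
          have h3 := hE 3
          simp [Finsupp.single_apply] at h0 h1 h2 h3
  · have h0 : coeff m A = 0 := by
      by_contra hc
      have := le_totalDegree (p := A) (s := m) (mem_support_iff.2 hc)
      rw [degsum] at this
      omega
    rw [h0]
    rw [if_neg, if_neg, if_neg, if_neg, if_neg] <;> try ring
    all_goals
      rintro rfl
      simp [Finsupp.single_apply] at hm

/-! ### Total degree facts -/

lemma degree_eq_degsum (d : Fin 4 →₀ ℕ) : d.degree = d.sum fun _ e => e := rfl

lemma coeff_zero_of_degree_gt {p : C4} {d : Fin 4 →₀ ℕ} (h : p.totalDegree < d.degree) :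
    coeff d p = 0 := by
  by_contra hc
  have := le_totalDegree (p := p) (s := d) (mem_support_iff.2 hc)
  rw [← degree_eq_degsum] at this
  omega

lemma td_mul_ge (p q : C4) (hp : p ≠ 0) (hq : q ≠ 0) :
    p.totalDegree + q.totalDegree ≤ (p * q).totalDegree := by
  set m := p.totalDegree with hmdef
  set n := q.totalDegree with hndef
  have hcomp : ∀ r : C4, r ≠ 0 → homogeneousComponent r.totalDegree r ≠ 0 := by
    intro r hr
    obtain ⟨d, hd, hsup⟩ := Finset.exists_mem_eq_sup r.support
      (support_nonempty.2 hr) (fun s => s.sum fun _ e => e)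
    intro hzero
    have h1 : coeff d (homogeneousComponent r.totalDegree r) = coeff d r := by
      rw [coeff_homogeneousComponent, if_pos]
      rw [degree_eq_degsum, ← hsup]
      rfl
    rw [hzero, coeff_zero] at h1
    exact (mem_support_iff.1 hd) h1.symm
  have hPm := hcomp p hp
  have hQn := hcomp q hq
  have hprodH : ((homogeneousComponent m p) * (homogeneousComponent n q)).IsHomogeneous (m + n) :=
    (homogeneousComponent_isHomogeneous m p).mul (homogeneousComponent_isHomogeneous n q)
  have hne : (homogeneousComponent m p) * (homogeneousComponent n q) ≠ 0 := mul_ne_zero hPm hQn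
  obtain ⟨d, hd⟩ := exists_coeff_ne_zero hne
  have hdeg : d.degree = m + n := by
    by_contra hcon
    exact hd (hprodH.coeff_eq_zero hcon)
  have key : coeff d (p * q)
      = coeff d ((homogeneousComponent m p) * (homogeneousComponent n q)) := by
    rw [coeff_mul, coeff_mul]
    refine Finset.sum_congr rfl ?_
    rintro ⟨u, v⟩ huv
    have huvd : u + v = d := Finset.HasAntidiagonal.mem_antidiagonal.1 huv
    have hsum : u.degree + v.degree = m + n := by
      rw [← hdeg, ← huvd]
      rw [degree_eq_degsum, degree_eq_degsum, degree_eq_degsum]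
      rw [Finsupp.sum_fintype _ _ (fun _ => rfl), Finsupp.sum_fintype _ _ (fun _ => rfl),
        Finsupp.sum_fintype _ _ (fun _ => rfl)]
      simp [Finset.sum_add_distrib]
    simp only [coeff_homogeneousComponent]
    by_cases hu : u.degree = m
    · have hv : v.degree = n := by omega
      rw [if_pos hu, if_pos hv]
    · rw [if_neg hu]
      by_cases hu2 : u.degree ≤ m
      · have hvn : q.totalDegree < v.degree := by omega
        rw [coeff_zero_of_degree_gt hvn]
        ring
      · have hun : p.totalDegree < u.degree := by omega
        rw [coeff_zero_of_degree_gt hun]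
        ring
  have hd2 : coeff d (p * q) ≠ 0 := by rw [key]; exact hd
  have hle := le_totalDegree (p := p * q) (s := d) (mem_support_iff.2 hd2)
  rw [← degree_eq_degsum, hdeg] at hle
  exact hle

lemma tdm_le (i j : Fin 4) (hij : i ≠ j) (z : ℂ) : (monomial (E i j) z : C4).totalDegree ≤ 2 := by
  refine le_trans (totalDegree_monomial_le _ _) ?_
  rw [Finsupp.sum_fintype _ _ (fun _ => rfl), Fin.sum_univ_four]
  simp only [E_apply, id_eq]
  fin_cases i <;> fin_cases j <;> simp_all

lemma td_Qform_le (p q r s : ℂ) : (Qform p q r s).totalDegree ≤ 2 := by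
  rw [Qform]
  refine le_trans (totalDegree_add _ _) (max_le (le_trans (totalDegree_add _ _)
    (max_le (le_trans (totalDegree_add _ _) (max_le ?_ ?_)) ?_)) ?_) <;>
    exact tdm_le _ _ (by decide) _

lemma eq_C_of_td_zero (A : C4) (h : A.totalDegree = 0) : ∃ z : ℂ, A = C z := by
  refine ⟨coeff 0 A, ?_⟩
  rw [totalDegree_eq_zero_iff] at h
  ext m
  by_cases hm : m = 0
  · subst hm; simp
  · have h0 : coeff m A = 0 := by
      by_contra hc
      exact hm (Finsupp.ext fun k => h m (mem_support_iff.2 hc) k)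
    rw [h0, coeff_C, if_neg (fun hcon => hm hcon.symm)]

/-! ### Evaluations -/

lemma eval_Qform (p q r s : ℂ) (v : Fin 4 → ℂ) :
    eval v (Qform p q r s) = p * v 0 * v 2 + q * v 0 * v 3 + r * v 1 * v 2 + s * v 1 * v 3 := by
  rw [Qform_eq]; simp

lemma eval_Lform (a : Fin 5 → ℂ) (v : Fin 4 → ℂ) :
    eval v (Lform a) = a 0 + a 1 * v 0 + a 2 * v 1 + a 3 * v 2 + a 4 * v 3 := by
  rw [Lform_eq]; simp

lemma evalP_Qform (p q r s : ℂ) (v w : ℂ × ℂ) :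
    evalP (Qform p q r s) v w
      = p * v.1 * w.1 + q * v.1 * w.2 + r * v.2 * w.1 + s * v.2 * w.2 := by
  rw [evalP, eval_Qform]
  simp

lemma Qform_zero_coeffs (p q r s : ℂ) (h : Qform p q r s = 0) :
    p = 0 ∧ q = 0 ∧ r = 0 ∧ s = 0 := by
  have hp := congrArg (eval ![1, 0, 1, 0]) h
  have hq := congrArg (eval ![1, 0, 0, 1]) h
  have hr := congrArg (eval ![0, 1, 1, 0]) h
  have hs := congrArg (eval ![0, 1, 0, 1]) h
  rw [eval_Qform] at hp hq hr hs
  simp at hp hq hr hs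
  exact ⟨hp, hq, hr, hs⟩

lemma smul_Qform (τ p q r s : ℂ) :
    τ • Qform p q r s = Qform (τ * p) (τ * q) (τ * r) (τ * s) := by
  simp [Qform, smul_add, smul_monomial, smul_eq_mul]

lemma isBihom_Qform (p q r s : ℂ) : IsBihom 1 1 (Qform p q r s) := by
  intro m hm
  have hne := mem_support_iff.1 hm
  rw [Qform] at hne
  simp only [coeff_add, coeff_monomial] at hne
  by_cases h1 : E 0 2 = m
  · rw [← h1]; constructor <;> simp [E_apply]
  by_cases h2 : E 0 3 = m
  · rw [← h2]; constructor <;> simp [E_apply]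
  by_cases h3 : E 1 2 = m
  · rw [← h3]; constructor <;> simp [E_apply]
  by_cases h4 : E 1 3 = m
  · rw [← h4]; constructor <;> simp [E_apply]
  rw [if_neg h1, if_neg h2, if_neg h3, if_neg h4] at hne
  simp at hne

/-! ### Irreducibility of a (1,1)-form with nonzero determinant -/

lemma irr_linear {R : Type*} [CommRing R] [IsDomain R] (a b : R)
    (ha : a ≠ 0) (hco : IsCoprime a b) :
    Irreducible (Polynomial.C a * Polynomial.X + Polynomial.C b : Polynomial R) := by
  classical
  have hdeg : (Polynomial.C a * Polynomial.X + Polynomial.C b : Polynomial R).natDegree = 1 :=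
    Polynomial.natDegree_linear ha
  have hf0 : (Polynomial.C a * Polynomial.X + Polynomial.C b : Polynomial R) ≠ 0 := fun h => by
    simp [h] at hdeg
  constructor
  · intro hu
    rw [Polynomial.natDegree_eq_zero_of_isUnit hu] at hdeg
    exact zero_ne_one hdeg
  · intro g h hf
    have hg0 : g ≠ 0 := fun h0 => hf0 (by rw [hf, h0, zero_mul])
    have hh0 : h ≠ 0 := fun h0 => hf0 (by rw [hf, h0, mul_zero])
    have hsum : g.natDegree + h.natDegree = 1 := by
      rw [← Polynomial.natDegree_mul hg0 hh0, ← hf, hdeg]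
    have key : ∀ u v : Polynomial R,
        Polynomial.C a * Polynomial.X + Polynomial.C b = u * v → u.natDegree = 0 → IsUnit u := by
      intro u v huv hu0
      obtain ⟨z, hz⟩ := Polynomial.natDegree_eq_zero.1 hu0
      have hza : z ∣ a := by
        refine ⟨v.coeff 1, ?_⟩
        have h1 := congrArg (fun t => Polynomial.coeff t 1) huv
        simpa [← hz, Polynomial.coeff_C_mul] using h1
      have hzb : z ∣ b := by
        refine ⟨v.coeff 0, ?_⟩
        have h2 := congrArg (fun t => Polynomial.coeff t 0) huv
        simp only [← hz, Polynomial.coeff_C_mul, Polynomial.coeff_add, Polynomial.coeff_C,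
          Polynomial.coeff_X_zero] at h2
        simpa using h2
      rw [← hz, Polynomial.isUnit_C]
      exact hco.isUnit_of_dvd' hza hzb
    rcases Nat.eq_zero_or_pos g.natDegree with hg | hg
    · exact Or.inl (key g h hf hg)
    · exact Or.inr (key h g (by rw [hf, mul_comm]) (by omega))

lemma coprime_lin (p q r s : ℂ) (hd : p * s - q * r ≠ 0) :
    IsCoprime (Polynomial.C p * Polynomial.X + Polynomial.C q : Polynomial ℂ)
      (Polynomial.C r * Polynomial.X + Polynomial.C s) := by
  have he0 : r * q - p * s ≠ 0 := fun h => hd (by linear_combination -h)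
  refine ⟨Polynomial.C (r / (r * q - p * s)), Polynomial.C (-p / (r * q - p * s)), ?_⟩
  have h1 : r / (r * q - p * s) * p + -p / (r * q - p * s) * r = 0 := by
    field_simp
    ring
  have h2 : r / (r * q - p * s) * q + -p / (r * q - p * s) * s = 1 := by
    field_simp
    ring
  calc Polynomial.C (r / (r * q - p * s)) * (Polynomial.C p * Polynomial.X + Polynomial.C q)
        + Polynomial.C (-p / (r * q - p * s)) * (Polynomial.C r * Polynomial.X + Polynomial.C s)
      = Polynomial.C (r / (r * q - p * s) * p + -p / (r * q - p * s) * r) * Polynomial.X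
        + Polynomial.C (r / (r * q - p * s) * q + -p / (r * q - p * s) * s) := by
        simp only [map_add, map_mul]
        ring
    _ = 1 := by rw [h1, h2]; simp

lemma linpoly_ne (p q : ℂ) (h : ¬(p = 0 ∧ q = 0)) :
    (Polynomial.C p * Polynomial.X + Polynomial.C q : Polynomial ℂ) ≠ 0 := by
  intro h0
  apply h
  constructor
  · have := congrArg (fun f => Polynomial.coeff f 1) h0
    simpa using this
  · have := congrArg (fun f => Polynomial.coeff f 0) h0
    simpa using this

lemma unit_extract (k m e : ℂ)
    (h : IsUnit (Polynomial.C (Polynomial.C k + Polynomial.C m * Polynomial.X)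
      + Polynomial.C (Polynomial.C e) * Polynomial.X : Polynomial (Polynomial ℂ))) :
    m = 0 ∧ e = 0 := by
  obtain ⟨r, hr, hCr⟩ := Polynomial.isUnit_iff.1 h
  have hcoe1 : Polynomial.C e = 0 := by
    have := congrArg (fun p => Polynomial.coeff p 1) hCr
    simpa using this.symm
  have he : e = 0 := by
    have := congrArg (fun p => Polynomial.coeff p 0) hcoe1
    simpa using this
  have hinner : Polynomial.C r
      = Polynomial.C (Polynomial.C k + Polynomial.C m * Polynomial.X) := by
    rw [hCr, hcoe1]; simp
  have hr2 : IsUnit (Polynomial.C k + Polynomial.C m * Polynomial.X : Polynomial ℂ) := by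
    have hreq : r = Polynomial.C k + Polynomial.C m * Polynomial.X := Polynomial.C_injective hinner
    rwa [hreq] at hr
  obtain ⟨w, hw, hCw⟩ := Polynomial.isUnit_iff.1 hr2
  have hm : m = 0 := by
    have := congrArg (fun p => Polynomial.coeff p 1) hCw
    simpa using this.symm
  exact ⟨hm, he⟩

def ψ1 : C4 →ₐ[ℂ] Polynomial (Polynomial ℂ) :=
  aeval ![Polynomial.X, 1, Polynomial.C Polynomial.X, 1]
def ψ2 : C4 →ₐ[ℂ] Polynomial (Polynomial ℂ) :=
  aeval ![1, Polynomial.X, 1, Polynomial.C Polynomial.X]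

lemma ψ1_Qform (p q r s : ℂ) : ψ1 (Qform p q r s) =
    Polynomial.C (Polynomial.C p * Polynomial.X + Polynomial.C q) * Polynomial.X
      + Polynomial.C (Polynomial.C r * Polynomial.X + Polynomial.C s) := by
  rw [Qform_eq, ψ1]
  simp [algebraMap_eq, Polynomial.algebraMap_apply]
  ring

lemma ψ2_Qform (p q r s : ℂ) : ψ2 (Qform p q r s) =
    Polynomial.C (Polynomial.C s * Polynomial.X + Polynomial.C r) * Polynomial.X
      + Polynomial.C (Polynomial.C q * Polynomial.X + Polynomial.C p) := by
  rw [Qform_eq, ψ2]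
  simp [algebraMap_eq, Polynomial.algebraMap_apply]
  ring

lemma ψ1_Lform (a : Fin 5 → ℂ) : ψ1 (Lform a) =
    Polynomial.C (Polynomial.C (a 0 + a 2 + a 4) + Polynomial.C (a 3) * Polynomial.X)
      + Polynomial.C (Polynomial.C (a 1)) * Polynomial.X := by
  rw [Lform_eq, ψ1]
  simp [algebraMap_eq, Polynomial.algebraMap_apply]
  ring

lemma ψ2_Lform (a : Fin 5 → ℂ) : ψ2 (Lform a) =
    Polynomial.C (Polynomial.C (a 0 + a 1 + a 3) + Polynomial.C (a 4) * Polynomial.X)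
      + Polynomial.C (Polynomial.C (a 2)) * Polynomial.X := by
  rw [Lform_eq, ψ2]
  simp [algebraMap_eq, Polynomial.algebraMap_apply]
  ring

lemma no_split (p q r s : ℂ) (hd : p * s - q * r ≠ 0) (a b : Fin 5 → ℂ)
    (ha1 : a 1 = 0) (ha3 : a 3 = 0) (hb2 : b 2 = 0) (hb4 : b 4 = 0)
    (hQ : Qform p q r s = Lform a * Lform b) : False := by
  have key : ∀ v : Fin 4 → ℂ,
      p * v 0 * v 2 + q * v 0 * v 3 + r * v 1 * v 2 + s * v 1 * v 3 =
        (a 0 + a 1 * v 0 + a 2 * v 1 + a 3 * v 2 + a 4 * v 3) *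
        (b 0 + b 1 * v 0 + b 2 * v 1 + b 3 * v 2 + b 4 * v 3) := by
    intro v
    have h := congrArg (eval v) hQ
    rwa [eval_Qform, map_mul, eval_Lform, eval_Lform] at h
  have e1 := key ![0,0,0,0]
  have e2 := key ![1,0,0,0]
  have e3 := key ![0,0,1,0]
  have e4 := key ![0,1,0,0]
  have e5 := key ![0,0,0,1]
  have e6 := key ![1,1,0,0]
  have e7 := key ![1,0,0,1]
  have e8 := key ![0,1,1,0]
  have e9 := key ![1,0,1,0]
  have e10 := key ![0,1,0,1]
  simp only [Matrix.cons_val_zero, Matrix.cons_val_one, Matrix.head_cons, Matrix.cons_val_two,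
    Matrix.tail_cons, Matrix.cons_val_three, mul_zero, mul_one, zero_add, add_zero,
    zero_mul] at e1 e2 e3 e4 e5 e6 e7 e8 e9 e10
  simp only [ha1, ha3, hb2, hb4, add_zero, zero_add] at e1 e2 e3 e4 e5 e6 e7 e8 e9 e10
  have hab : a 2 * b 1 = 0 := by linear_combination -e1 + e2 + e4 - e6
  have hq : q = a 4 * b 1 := by linear_combination e1 - e2 - e5 + e7
  have hr : r = a 2 * b 3 := by linear_combination e1 - e3 - e4 + e8
  have hp : p = 0 := by linear_combination e1 - e2 - e3 + e9
  have hs : s = 0 := by linear_combination e1 - e4 - e5 + e10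
  rw [hp, hs] at hd
  rcases mul_eq_zero.1 hab with h | h
  · exact hd (by rw [hq, hr, h]; ring)
  · exact hd (by rw [hq, hr, h]; ring)

lemma isUnit_C4 {z : ℂ} (hz : z ≠ 0) : IsUnit (C z : C4) :=
  IsUnit.of_mul_eq_one (C z⁻¹) (by rw [← C_mul, mul_inv_cancel₀ hz, C_1])

lemma irr_Qform (p q r s : ℂ) (hd : p * s - q * r ≠ 0) : Irreducible (Qform p q r s) := by
  have hpq : ¬(p = 0 ∧ q = 0) := by rintro ⟨rfl, rfl⟩; exact hd (by ring)
  have hsr : ¬(s = 0 ∧ r = 0) := by rintro ⟨rfl, rfl⟩; exact hd (by ring)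
  have hirr1 : Irreducible (ψ1 (Qform p q r s)) := by
    rw [ψ1_Qform]
    exact irr_linear _ _ (linpoly_ne p q hpq) (coprime_lin p q r s hd)
  have hirr2 : Irreducible (ψ2 (Qform p q r s)) := by
    rw [ψ2_Qform]
    exact irr_linear _ _ (linpoly_ne s r hsr)
      (coprime_lin s r q p (fun h => hd (by linear_combination h)))
  constructor
  · intro hu
    exact hirr1.not_isUnit (hu.map ψ1)
  · intro A B hAB
    have hQ0 : Qform p q r s ≠ 0 := fun h0 => hirr1.ne_zero (by rw [h0, map_zero])
    have hA0 : A ≠ 0 := fun h => hQ0 (by rw [hAB, h, zero_mul])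
    have hB0 : B ≠ 0 := fun h => hQ0 (by rw [hAB, h, mul_zero])
    have hsum : A.totalDegree + B.totalDegree ≤ 2 := by
      refine le_trans (td_mul_ge A B hA0 hB0) ?_
      rw [← hAB]
      exact td_Qform_le p q r s
    by_cases hAc : A.totalDegree = 0
    · obtain ⟨z, hz⟩ := eq_C_of_td_zero A hAc
      left
      rw [hz]
      exact isUnit_C4 (fun h0 => hA0 (by rw [hz, h0, map_zero]))
    by_cases hBc : B.totalDegree = 0
    · obtain ⟨z, hz⟩ := eq_C_of_td_zero B hBc
      right
      rw [hz]
      exact isUnit_C4 (fun h0 => hB0 (by rw [hz, h0, map_zero]))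
    have hAle : A.totalDegree ≤ 1 := by omega
    have hBle : B.totalDegree ≤ 1 := by omega
    obtain ⟨av, hAv⟩ := lin_rep A hAle
    obtain ⟨bv, hBv⟩ := lin_rep B hBle
    have h1 : ψ1 (Qform p q r s) = ψ1 A * ψ1 B := by rw [hAB, map_mul]
    have h2 : ψ2 (Qform p q r s) = ψ2 A * ψ2 B := by rw [hAB, map_mul]
    rcases hirr1.isUnit_or_isUnit h1 with u1 | u1 <;> rcases hirr2.isUnit_or_isUnit h2 with u2 | u2
    · -- A is a constant
      left
      rw [hAv, ψ1_Lform] at u1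
      rw [hAv, ψ2_Lform] at u2
      obtain ⟨ha3, ha1⟩ := unit_extract _ _ _ u1
      obtain ⟨ha4, ha2⟩ := unit_extract _ _ _ u2
      have hz : A = C (av 0) := by
        rw [hAv, Lform_eq, ha1, ha2, ha3, ha4]
        simp
      rw [hz]
      exact isUnit_C4 (fun h0 => hA0 (by rw [hz, h0, map_zero]))
    · -- ψ1 A and ψ2 B units : impossible
      exfalso
      rw [hAv, ψ1_Lform] at u1
      rw [hBv, ψ2_Lform] at u2
      obtain ⟨ha3, ha1⟩ := unit_extract _ _ _ u1
      obtain ⟨hb4, hb2⟩ := unit_extract _ _ _ u2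
      exact no_split p q r s hd av bv ha1 ha3 hb2 hb4 (by rw [← hAv, ← hBv]; exact hAB)
    · -- ψ1 B and ψ2 A units : impossible
      exfalso
      rw [hBv, ψ1_Lform] at u1
      rw [hAv, ψ2_Lform] at u2
      obtain ⟨hb3, hb1⟩ := unit_extract _ _ _ u1
      obtain ⟨ha4, ha2⟩ := unit_extract _ _ _ u2
      refine no_split p q r s hd bv av hb1 hb3 ha2 ha4 ?_
      rw [hAB, hAv, hBv, mul_comm]
    · -- B is a constant
      right
      rw [hBv, ψ1_Lform] at u1
      rw [hBv, ψ2_Lform] at u2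
      obtain ⟨hb3, hb1⟩ := unit_extract _ _ _ u1
      obtain ⟨hb4, hb2⟩ := unit_extract _ _ _ u2
      have hz : B = C (bv 0) := by
        rw [hBv, Lform_eq, hb1, hb2, hb3, hb4]
        simp
      rw [hz]
      exact isUnit_C4 (fun h0 => hB0 (by rw [hz, h0, map_zero]))

/-- The core scalar linear-algebra fact: existence and essential uniqueness of the
coefficient vector of a (1,1)-form through three generic points. -/
lemma core (a b c d : Fin 3 → ℂ)
    (hv : ∀ i, ¬(a i = 0 ∧ b i = 0)) (_hw : ∀ i, ¬(c i = 0 ∧ d i = 0))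
    (hxd : ∀ i j, i ≠ j → a i * b j - a j * b i ≠ 0)
    (hyd : ∀ i j, i ≠ j → c i * d j - c j * d i ≠ 0) :
    ∃ p₀ q₀ r₀ s₀ : ℂ, p₀ * s₀ - q₀ * r₀ ≠ 0 ∧
      (∀ i, p₀ * a i * c i + q₀ * a i * d i + r₀ * b i * c i + s₀ * b i * d i = 0) ∧
      (∀ p q r s : ℂ,
        (∀ i, p * a i * c i + q * a i * d i + r * b i * c i + s * b i * d i = 0) →
        ∃ τ : ℂ, p = τ * p₀ ∧ q = τ * q₀ ∧ r = τ * r₀ ∧ s = τ * s₀) := by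
  have hx01 : a 0 * b 1 - a 1 * b 0 ≠ 0 := hxd 0 1 (by decide)
  have hx21 : a 2 * b 1 - a 1 * b 2 ≠ 0 := hxd 2 1 (by decide)
  have hx02 : a 0 * b 2 - a 2 * b 0 ≠ 0 := hxd 0 2 (by decide)
  have hy01 : c 0 * d 1 - c 1 * d 0 ≠ 0 := hyd 0 1 (by decide)
  have hy21 : c 2 * d 1 - c 1 * d 2 ≠ 0 := hyd 2 1 (by decide)
  have hy02 : c 0 * d 2 - c 2 * d 0 ≠ 0 := hyd 0 2 (by decide)
  have hAA : ((a 0 * b 1 - a 1 * b 0) * (c 2 * d 1 - c 1 * d 2)) ≠ 0 := mul_ne_zero hx01 hy21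
  have hBB : ((c 0 * d 1 - c 1 * d 0) * (a 2 * b 1 - a 1 * b 2)) ≠ 0 := mul_ne_zero hy01 hx21
  have hCC : ((a 0 * b 1 - a 1 * b 0) * (c 0 * d 2 - c 2 * d 0)) ≠ 0 := mul_ne_zero hx01 hy02
  have hDD : ((c 0 * d 1 - c 1 * d 0) * (a 0 * b 2 - a 2 * b 0)) ≠ 0 := mul_ne_zero hy01 hx02
  refine ⟨((((c 0 * d 1 - c 1 * d 0) * (a 2 * b 1 - a 1 * b 2)) * ((a 0 * b 1 - a 1 * b 0) * (c 0 * d 2 - c 2 * d 0))) * b 0 * d 1 - (((a 0 * b 1 - a 1 * b 0) * (c 2 * d 1 - c 1 * d 2)) * ((c 0 * d 1 - c 1 * d 0) * (a 0 * b 2 - a 2 * b 0))) * b 1 * d 0), (-((((c 0 * d 1 - c 1 * d 0) * (a 2 * b 1 - a 1 * b 2)) * ((a 0 * b 1 - a 1 * b 0) * (c 0 * d 2 - c 2 * d 0))) * b 0 * c 1) + (((a 0 * b 1 - a 1 * b 0) * (c 2 * d 1 - c 1 * d 2)) * ((c 0 * d 1 - c 1 * d 0) * (a 0 * b 2 - a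 2 * b 0))) * b 1 * c 0), (-((((c 0 * d 1 - c 1 * d 0) * (a 2 * b 1 - a 1 * b 2)) * ((a 0 * b 1 - a 1 * b 0) * (c 0 * d 2 - c 2 * d 0))) * a 0 * d 1) + (((a 0 * b 1 - a 1 * b 0) * (c 2 * d 1 - c 1 * d 2)) * ((c 0 * d 1 - c 1 * d 0) * (a 0 * b 2 - a 2 * b 0))) * a 1 * d 0), ((((c 0 * d 1 - c 1 * d 0) * (a 2 * b 1 - a 1 * b 2)) * ((a 0 * b 1 - a 1 * b 0) * (c 0 * d 2 - c 2 * d 0))) * a 0 * c 1 - (((a 0 * b 1 - a 1 * b 0) * (c 2 * d 1 - c 1 * d 2)) * ((c 0 * d 1 - c 1 * d 0) * (a 0 * b 2 - a 2 * b 0))) * a 1 * c 0), ?_, ?_, ?_⟩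
  · have hid : ((((c 0 * d 1 - c 1 * d 0) * (a 2 * b 1 - a 1 * b 2)) * ((a 0 * b 1 - a 1 * b 0) * (c 0 * d 2 - c 2 * d 0))) * b 0 * d 1 - (((a 0 * b 1 - a 1 * b 0) * (c 2 * d 1 - c 1 * d 2)) * ((c 0 * d 1 - c 1 * d 0) * (a 0 * b 2 - a 2 * b 0))) * b 1 * d 0) * ((((c 0 * d 1 - c 1 * d 0) * (a 2 * b 1 - a 1 * b 2)) * ((a 0 * b 1 - a 1 * b 0) * (c 0 * d 2 - c 2 * d 0))) * a 0 * c 1 - (((a 0 * b 1 - a 1 * b 0) * (c 2 * d 1 - c 1 * d 2)) * ((c 0 * d 1 - c 1 * d 0) * (a 0 * b 2 - a 2 * b 0))) * a 1 * c 0) - (-((((c 0 * d 1 - c 1 * d 0) * (a 2 * b 1 - a 1 * b 2)) * ((a 0 * b 1 - a 1 * b 0) * (c 0 * d 2 - c 2 * d 0))) * b 0 * c 1) + (((a 0 * b 1 - a 1 * b 0) * (c 2 * d 1 - c 1 * d 2)) * ((c 0 * d 1 - c 1 * d 0) * (a 0 * b 2 - a 2 * b 0))) * b 1 * c 0) * (-((((c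 0 * d 1 - c 1 * d 0) * (a 2 * b 1 - a 1 * b 2)) * ((a 0 * b 1 - a 1 * b 0) * (c 0 * d 2 - c 2 * d 0))) * a 0 * d 1) + (((a 0 * b 1 - a 1 * b 0) * (c 2 * d 1 - c 1 * d 2)) * ((c 0 * d 1 - c 1 * d 0) * (a 0 * b 2 - a 2 * b 0))) * a 1 * d 0)
        = ((((c 0 * d 1 - c 1 * d 0) * (a 2 * b 1 - a 1 * b 2)) * ((a 0 * b 1 - a 1 * b 0) * (c 0 * d 2 - c 2 * d 0))) * (((a 0 * b 1 - a 1 * b 0) * (c 2 * d 1 - c 1 * d 2)) * ((c 0 * d 1 - c 1 * d 0) * (a 0 * b 2 - a 2 * b 0)))) * ((a 0 * b 1 - a 1 * b 0) * (c 0 * d 1 - c 1 * d 0)) := by ring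
    rw [hid]
    exact mul_ne_zero (mul_ne_zero (mul_ne_zero hBB hCC) (mul_ne_zero hAA hDD))
      (mul_ne_zero hx01 hy01)
  · intro i
    fin_cases i
    · show ((((c 0 * d 1 - c 1 * d 0) * (a 2 * b 1 - a 1 * b 2)) * ((a 0 * b 1 - a 1 * b 0) * (c 0 * d 2 - c 2 * d 0))) * b 0 * d 1 - (((a 0 * b 1 - a 1 * b 0) * (c 2 * d 1 - c 1 * d 2)) * ((c 0 * d 1 - c 1 * d 0) * (a 0 * b 2 - a 2 * b 0))) * b 1 * d 0) * a 0 * c 0 + (-((((c 0 * d 1 - c 1 * d 0) * (a 2 * b 1 - a 1 * b 2)) * ((a 0 * b 1 - a 1 * b 0) * (c 0 * d 2 - c 2 * d 0))) * b 0 * c 1) + (((a 0 * b 1 - a 1 * b 0) * (c 2 * d 1 - c 1 * d 2)) * ((c 0 * d 1 - c 1 * d 0) * (a 0 * b 2 - a 2 * b 0))) * b 1 * c 0) * a 0 * d 0 + (-((((c 0 * d 1 - c 1 * d 0) * (a 2 * b 1 - a 1 * b 2)) * ((a 0 * b 1 - a 1 * b 0) * (c 0 * d 2 - c 2 * d 0)))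 * a 0 * d 1) + (((a 0 * b 1 - a 1 * b 0) * (c 2 * d 1 - c 1 * d 2)) * ((c 0 * d 1 - c 1 * d 0) * (a 0 * b 2 - a 2 * b 0))) * a 1 * d 0) * b 0 * c 0 + ((((c 0 * d 1 - c 1 * d 0) * (a 2 * b 1 - a 1 * b 2)) * ((a 0 * b 1 - a 1 * b 0) * (c 0 * d 2 - c 2 * d 0))) * a 0 * c 1 - (((a 0 * b 1 - a 1 * b 0) * (c 2 * d 1 - c 1 * d 2)) * ((c 0 * d 1 - c 1 * d 0) * (a 0 * b 2 - a 2 * b 0))) * a 1 * c 0) * b 0 * d 0 = 0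
      ring
    · show ((((c 0 * d 1 - c 1 * d 0) * (a 2 * b 1 - a 1 * b 2)) * ((a 0 * b 1 - a 1 * b 0) * (c 0 * d 2 - c 2 * d 0))) * b 0 * d 1 - (((a 0 * b 1 - a 1 * b 0) * (c 2 * d 1 - c 1 * d 2)) * ((c 0 * d 1 - c 1 * d 0) * (a 0 * b 2 - a 2 * b 0))) * b 1 * d 0) * a 1 * c 1 + (-((((c 0 * d 1 - c 1 * d 0) * (a 2 * b 1 - a 1 * b 2)) * ((a 0 * b 1 - a 1 * b 0) * (c 0 * d 2 - c 2 * d 0))) * b 0 * c 1) + (((a 0 * b 1 - a 1 * b 0) * (c 2 * d 1 - c 1 * d 2)) * ((c 0 * d 1 - c 1 * d 0) * (a 0 * b 2 - a 2 * b 0))) * b 1 * c 0) * a 1 * d 1 + (-((((c 0 * d 1 - c 1 * d 0) * (a 2 * b 1 - a 1 * b 2)) * ((a 0 * b 1 - a 1 * b 0) * (c 0 * d 2 - c 2 * d 0))) * a 0 * d 1) + (((a 0 * b 1 - a 1 * b 0) * (c 2 * d 1 - c 1 * d 2)) * ((c 0 * d 1 - c 1 * d 0) * (a 0 * b 2 -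 a 2 * b 0))) * a 1 * d 0) * b 1 * c 1 + ((((c 0 * d 1 - c 1 * d 0) * (a 2 * b 1 - a 1 * b 2)) * ((a 0 * b 1 - a 1 * b 0) * (c 0 * d 2 - c 2 * d 0))) * a 0 * c 1 - (((a 0 * b 1 - a 1 * b 0) * (c 2 * d 1 - c 1 * d 2)) * ((c 0 * d 1 - c 1 * d 0) * (a 0 * b 2 - a 2 * b 0))) * a 1 * c 0) * b 1 * d 1 = 0
      ring
    · show ((((c 0 * d 1 - c 1 * d 0) * (a 2 * b 1 - a 1 * b 2)) * ((a 0 * b 1 - a 1 * b 0) * (c 0 * d 2 - c 2 * d 0))) * b 0 * d 1 - (((a 0 * b 1 - a 1 * b 0) * (c 2 * d 1 - c 1 * d 2)) * ((c 0 * d 1 - c 1 * d 0) * (a 0 * b 2 - a 2 * b 0))) * b 1 * d 0) * a 2 * c 2 + (-((((c 0 * d 1 - c 1 * d 0) * (a 2 * b 1 - a 1 * b 2)) * ((a 0 * b 1 - a 1 * b 0) * (c 0 * d 2 - c 2 * d 0))) * b 0 * c 1) + (((a 0 * b 1 - a 1 * b 0) * (c 2 * d 1 - c 1 * d 2)) *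 ((c 0 * d 1 - c 1 * d 0) * (a 0 * b 2 - a 2 * b 0))) * b 1 * c 0) * a 2 * d 2 + (-((((c 0 * d 1 - c 1 * d 0) * (a 2 * b 1 - a 1 * b 2)) * ((a 0 * b 1 - a 1 * b 0) * (c 0 * d 2 - c 2 * d 0))) * a 0 * d 1) + (((a 0 * b 1 - a 1 * b 0) * (c 2 * d 1 - c 1 * d 2)) * ((c 0 * d 1 - c 1 * d 0) * (a 0 * b 2 - a 2 * b 0))) * a 1 * d 0) * b 2 * c 2 + ((((c 0 * d 1 - c 1 * d 0) * (a 2 * b 1 - a 1 * b 2)) * ((a 0 * b 1 - a 1 * b 0) * (c 0 * d 2 - c 2 * d 0))) * a 0 * c 1 - (((a 0 * b 1 - a 1 * b 0) * (c 2 * d 1 - c 1 * d 2)) * ((c 0 * d 1 - c 1 * d 0) * (a 0 * b 2 - a 2 * b 0))) * a 1 * c 0) * b 2 * d 2 = 0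
      ring
  · intro p q r s hvan
    have e0 := hvan 0
    have e1 := hvan 1
    have e2 := hvan 2
    obtain ⟨u0, hu01, hu02⟩ := ker2' (a 0) (b 0) (p * c 0 + q * d 0) (r * c 0 + s * d 0)
      (hv 0) (by linear_combination e0)
    obtain ⟨u1, hu11, hu12⟩ := ker2' (a 1) (b 1) (p * c 1 + q * d 1) (r * c 1 + s * d 1)
      (hv 1) (by linear_combination e1)
    obtain ⟨u2, hu21, hu22⟩ := ker2' (a 2) (b 2) (p * c 2 + q * d 2) (r * c 2 + s * d 2)
      (hv 2) (by linear_combination e2)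
    -- the two "coordinates change" constraints on the u's
    obtain ⟨hα, hβ⟩ := indep2'
      ((c 2 * d 1 - c 1 * d 2) * u0 * (a 0 * b 1 - a 1 * b 0) - u2 * (c 0 * d 1 - c 1 * d 0) * (a 2 * b 1 - a 1 * b 2))
      ((c 0 * d 2 - c 2 * d 0) * u1 * (a 0 * b 1 - a 1 * b 0) - u2 * (c 0 * d 1 - c 1 * d 0) * (a 0 * b 2 - a 2 * b 0))
      (b 0) (-(a 0)) (b 1) (-(a 1))
      (by linear_combination (-((c 2 * d 1 - c 1 * d 2) * (a 0 * b 1 - a 1 * b 0))) * hu01 + (-((c 0 * d 2 - c 2 * d 0) * (a 0 * b 1 - a 1 * b 0))) * hu11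
            + ((c 0 * d 1 - c 1 * d 0) * (a 0 * b 1 - a 1 * b 0)) * hu21)
      (by linear_combination (-((c 2 * d 1 - c 1 * d 2) * (a 0 * b 1 - a 1 * b 0))) * hu02 + (-((c 0 * d 2 - c 2 * d 0) * (a 0 * b 1 - a 1 * b 0))) * hu12
            + ((c 0 * d 1 - c 1 * d 0) * (a 0 * b 1 - a 1 * b 0)) * hu22)
      (by intro hcon; apply hx01; linear_combination hcon)
    have hu0' : u0 * (((a 0 * b 1 - a 1 * b 0) * (c 2 * d 1 - c 1 * d 2)) * ((a 0 * b 1 - a 1 * b 0) * (c 0 * d 2 - c 2 * d 0))) = u2 * (((c 0 * d 1 - c 1 * d 0) * (a 2 * b 1 - a 1 * b 2)) * ((a 0 * b 1 - a 1 * b 0) * (c 0 * d 2 - c 2 * d 0))) := by linear_combination ((a 0 * b 1 - a 1 * b 0) * (c 0 * d 2 - c 2 * d 0)) * hα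
    have hu1' : u1 * (((a 0 * b 1 - a 1 * b 0) * (c 2 * d 1 - c 1 * d 2)) * ((a 0 * b 1 - a 1 * b 0) * (c 0 * d 2 - c 2 * d 0))) = u2 * (((a 0 * b 1 - a 1 * b 0) * (c 2 * d 1 - c 1 * d 2)) * ((c 0 * d 1 - c 1 * d 0) * (a 0 * b 2 - a 2 * b 0))) := by linear_combination ((a 0 * b 1 - a 1 * b 0) * (c 2 * d 1 - c 1 * d 2)) * hβ
    -- Cramer formulas for p q r s in terms of u0 u1
    have hP : (c 0 * d 1 - c 1 * d 0) * p = u0 * (b 0 * d 1) - u1 * (b 1 * d 0) := by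
      linear_combination d 1 * hu01 - d 0 * hu11
    have hQ : (c 0 * d 1 - c 1 * d 0) * q = -(u0 * (b 0 * c 1)) + u1 * (b 1 * c 0) := by
      linear_combination (-(c 1)) * hu01 + c 0 * hu11
    have hR : (c 0 * d 1 - c 1 * d 0) * r = -(u0 * (a 0 * d 1)) + u1 * (a 1 * d 0) := by
      linear_combination d 1 * hu02 - d 0 * hu12
    have hS : (c 0 * d 1 - c 1 * d 0) * s = u0 * (a 0 * c 1) - u1 * (a 1 * c 0) := by
      linear_combination (-(c 1)) * hu02 + c 0 * hu12
    have hden : ((a 0 * b 1 - a 1 * b 0) * (c 2 * d 1 - c 1 * d 2)) * ((a 0 * b 1 - a 1 * b 0) * (c 0 * d 2 - c 2 * d 0)) * (c 0 * d 1 - c 1 * d 0) ≠ 0 := mul_ne_zero (mul_ne_zero hAA hCC) hy01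
    refine ⟨u2 / (((a 0 * b 1 - a 1 * b 0) * (c 2 * d 1 - c 1 * d 2)) * ((a 0 * b 1 - a 1 * b 0) * (c 0 * d 2 - c 2 * d 0)) * (c 0 * d 1 - c 1 * d 0)), ?_, ?_, ?_, ?_⟩
    · rw [div_mul_eq_mul_div, eq_div_iff hden]
      linear_combination (b 0 * d 1) * hu0' - (b 1 * d 0) * hu1' + (((a 0 * b 1 - a 1 * b 0) * (c 2 * d 1 - c 1 * d 2)) * ((a 0 * b 1 - a 1 * b 0) * (c 0 * d 2 - c 2 * d 0))) * hP
    · rw [div_mul_eq_mul_div, eq_div_iff hden]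
      linear_combination (-(b 0 * c 1)) * hu0' + (b 1 * c 0) * hu1' + (((a 0 * b 1 - a 1 * b 0) * (c 2 * d 1 - c 1 * d 2)) * ((a 0 * b 1 - a 1 * b 0) * (c 0 * d 2 - c 2 * d 0))) * hQ
    · rw [div_mul_eq_mul_div, eq_div_iff hden]
      linear_combination (-(a 0 * d 1)) * hu0' + (a 1 * d 0) * hu1' + (((a 0 * b 1 - a 1 * b 0) * (c 2 * d 1 - c 1 * d 2)) * ((a 0 * b 1 - a 1 * b 0) * (c 0 * d 2 - c 2 * d 0))) * hR
    · rw [div_mul_eq_mul_div, eq_div_iff hden]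
      linear_combination (a 0 * c 1) * hu0' - (a 1 * c 0) * hu1' + (((a 0 * b 1 - a 1 * b 0) * (c 2 * d 1 - c 1 * d 2)) * ((a 0 * b 1 - a 1 * b 0) * (c 0 * d 2 - c 2 * d 0))) * hS

/-- Three points of ℙ¹×ℙ¹, no two sharing a first coordinate and no two sharing a
second coordinate (given by nonzero, pairwise non-proportional representatives).
Then the space of bidegree (1,1) polynomials vanishing at the three points is
one-dimensional, and every nonzero element of it is irreducible. -/
theorem bidegree_one_one_through_three_generic_points
    (x y : Fin 3 → ℂ × ℂ) (hx0 : ∀ i, x i ≠ 0) (hy0 : ∀ i, y i ≠ 0)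
    (hx : ∀ i j, i ≠ j → ¬ ∃ t : ℂ, x j = t • x i)
    (hy : ∀ i j, i ≠ j → ¬ ∃ t : ℂ, y j = t • y i) :
    (∃ P₀ : C4, P₀ ≠ 0 ∧ IsBihom 1 1 P₀ ∧ (∀ i, evalP P₀ (x i) (y i) = 0) ∧
      ∀ Q : C4, IsBihom 1 1 Q → (∀ i, evalP Q (x i) (y i) = 0) → ∃ t : ℂ, Q = t • P₀) ∧
    (∀ Q : C4, Q ≠ 0 → IsBihom 1 1 Q → (∀ i, evalP Q (x i) (y i) = 0) → Irreducible Q) := by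
  obtain ⟨p₀, q₀, r₀, s₀, hdet, hvan, huniq⟩ :=
    core (fun i => (x i).1) (fun i => (x i).2) (fun i => (y i).1) (fun i => (y i).2)
      (fun i h => hx0 i (Prod.ext h.1 h.2)) (fun i h => hy0 i (Prod.ext h.1 h.2))
      (fun i j hij hcon => det_ne_of_not_prop (x i) (x j) (hx0 i) (hx i j hij)
        (by linear_combination hcon))
      (fun i j hij hcon => det_ne_of_not_prop (y i) (y j) (hy0 i) (hy i j hij)
        (by linear_combination hcon))
  have keyuniq : ∀ Q : C4, IsBihom 1 1 Q → (∀ i, evalP Q (x i) (y i) = 0) →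
      ∃ p q r s τ : ℂ, Q = Qform p q r s ∧
        p = τ * p₀ ∧ q = τ * q₀ ∧ r = τ * r₀ ∧ s = τ * s₀ := by
    intro Q hbQ hvQ
    obtain ⟨p, q, r, s, hrep⟩ := bihom_rep Q hbQ
    have heqs : ∀ i, p * (x i).1 * (y i).1 + q * (x i).1 * (y i).2
        + r * (x i).2 * (y i).1 + s * (x i).2 * (y i).2 = 0 := by
      intro i
      have := hvQ i
      rwa [hrep, evalP_Qform] at this
    obtain ⟨τ, hp, hq, hr, hs⟩ := huniq p q r s (fun i => by simpa using heqs i)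
    exact ⟨p, q, r, s, τ, hrep, hp, hq, hr, hs⟩
  constructor
  · refine ⟨Qform p₀ q₀ r₀ s₀, ?_, isBihom_Qform _ _ _ _, ?_, ?_⟩
    · intro h0
      obtain ⟨h1, h2, h3, h4⟩ := Qform_zero_coeffs _ _ _ _ h0
      rw [h1, h2, h3, h4] at hdet
      exact hdet (by ring)
    · intro i
      rw [evalP_Qform]
      simpa using hvan i
    · intro Q hbQ hvQ
      obtain ⟨p, q, r, s, τ, hrep, hp, hq, hr, hs⟩ := keyuniq Q hbQ hvQ
      refine ⟨τ, ?_⟩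
      rw [hrep, smul_Qform, hp, hq, hr, hs]
  · intro Q hQ0 hbQ hvQ
    obtain ⟨p, q, r, s, τ, hrep, hp, hq, hr, hs⟩ := keyuniq Q hbQ hvQ
    have hτ : τ ≠ 0 := by
      rintro rfl
      apply hQ0
      rw [hrep, hp, hq, hr, hs]
      simp [Qform]
    have hdQ : p * s - q * r ≠ 0 := by
      have hid : p * s - q * r = τ ^ 2 * (p₀ * s₀ - q₀ * r₀) := by
        rw [hp, hq, hr, hs]; ring
      rw [hid]
      exact mul_ne_zero (pow_ne_zero 2 hτ) hdet
    rw [hrep]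
    exact irr_Qform p q r s hdQ
end
end

section
/- Let P and Q be bihomogeneous polynomials of bidegree (1,1) in ℂ[X₀,X₁,Y₀,Y₁] with no common non-unit factor. Then P and Q have at most 2 common zeros in ℙ¹×ℙ¹, i.e., the set of points ([x₀:x₁],[y₀:y₁]) with P(x₀,x₁,y₀,y₁) = Q(x₀,x₁,y₀,y₁) = 0 has at most 2 elements. (Bezout's theorem on ℙ¹×ℙ¹: the intersection number of two (1,1)-curves is 2.) -/
open MvPolynomial

noncomputable section

/-- ℙ¹ as the projectivization of ℂ². -/
abbrev P1 : Type := Projectivization ℂ (ℂ × ℂ)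

/-- A polynomial in ℂ[X₀,X₁,Y₀,Y₁] vanishes at a point `(p,q)` of ℙ¹×ℙ¹ if it
vanishes at every choice of representatives. -/
def VanishesAt (P : C4) (p q : P1) : Prop :=
  ∀ (v w : ℂ × ℂ) (hv : v ≠ 0) (hw : w ≠ 0),
    Projectivization.mk ℂ v hv = p → Projectivization.mk ℂ w hw = q → evalP P v w = 0

private lemma propor (x y x' y' : ℂ) (h : x*y' - y*x' = 0) (hxy : ¬(x = 0 ∧ y = 0)) :
    ∃ α : ℂ, x' = α*x ∧ y' = α*y := by
  by_cases hx : x = 0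
  · have hy : y ≠ 0 := fun hy => hxy ⟨hx, hy⟩
    have hx' : x' = 0 := by
      subst hx
      have : y * x' = 0 := by linear_combination -h
      rcases mul_eq_zero.mp this with h' | h'
      · exact absurd h' hy
      · exact h'
    exact ⟨y'/y, by simp [hx, hx'], by field_simp⟩
  · refine ⟨x'/x, by field_simp, ?_⟩
    field_simp
    linear_combination h

private lemma kill2 (A B u z u' z' : ℂ) (h1 : A*u + B*z = 0) (h2 : A*u' + B*z' = 0)
    (hd : u*z' - z*u' ≠ 0) : A = 0 ∧ B = 0 := by
  constructor
  · have h : A * (u*z' - z*u') = 0 := by linear_combination z'*h1 - z*h2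
    exact (mul_eq_zero.mp h).resolve_right hd
  · have h : B * (u*z' - z*u') = 0 := by linear_combination -u'*h1 + u*h2
    exact (mul_eq_zero.mp h).resolve_right hd

private lemma detzero (A B A' B' u z : ℂ) (h1 : A*u + B*z = 0) (h2 : A'*u + B'*z = 0)
    (hu : ¬(u = 0 ∧ z = 0)) : A*B' - B*A' = 0 := by
  by_cases h : u = 0
  · have hz : z ≠ 0 := fun hz => hu ⟨h, hz⟩
    have : (A*B' - B*A') * z = 0 := by linear_combination -A'*h1 + A*h2
    exact (mul_eq_zero.mp this).resolve_right hz
  · have : (A*B' - B*A') * u = 0 := by linear_combination B'*h1 - B*h2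
    exact (mul_eq_zero.mp this).resolve_right h

private lemma mk_eq_mk_of_det (v w : ℂ × ℂ) (hv : v ≠ 0) (hw : w ≠ 0)
    (h : v.1*w.2 - v.2*w.1 = 0) :
    Projectivization.mk ℂ v hv = Projectivization.mk ℂ w hw := by
  rw [Projectivization.mk_eq_mk_iff]
  by_cases hw1 : w.1 = 0
  · have hw2 : w.2 ≠ 0 := by
      intro hw2; exact hw (Prod.ext hw1 hw2)
    have hv1 : v.1 = 0 := by
      have : v.1 * w.2 = 0 := by rw [hw1] at h; linear_combination h
      exact (mul_eq_zero.mp this).resolve_right hw2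
    have hv2 : v.2 ≠ 0 := fun hv2 => hv (Prod.ext hv1 hv2)
    refine ⟨Units.mk0 (v.2/w.2) (by simp [hv2, hw2]), ?_⟩
    have : (v.2/w.2) • w = v := by
      apply Prod.ext <;> simp [Prod.smul_def, smul_eq_mul, hw1, hv1]
      field_simp
    simpa using this
  · have hv1 : v.1 ≠ 0 := by
      intro hv1
      have : v.2 * w.1 = 0 := by rw [hv1] at h; linear_combination -h
      have hv2 := (mul_eq_zero.mp this).resolve_right hw1
      exact hv (Prod.ext hv1 hv2)
    refine ⟨Units.mk0 (v.1/w.1) (by simp [hv1, hw1]), ?_⟩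
    have : (v.1/w.1) • w = v := by
      apply Prod.ext <;> simp [Prod.smul_def, smul_eq_mul]
      · field_simp
      · field_simp; linear_combination h
    simpa using this

private def e02 : Fin 4 →₀ ℕ := Finsupp.single 0 1 + Finsupp.single 2 1
private def e03 : Fin 4 →₀ ℕ := Finsupp.single 0 1 + Finsupp.single 3 1
private def e12 : Fin 4 →₀ ℕ := Finsupp.single 1 1 + Finsupp.single 2 1
private def e13 : Fin 4 →₀ ℕ := Finsupp.single 1 1 + Finsupp.single 3 1

private lemma bihom_classify (d : Fin 4 →₀ ℕ) (h1 : d 0 + d 1 = 1) (h2 : d 2 + d 3 = 1) :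
    d = e02 ∨ d = e03 ∨ d = e12 ∨ d = e13 := by
  have h0 : d 0 = 1 ∧ d 1 = 0 ∨ d 0 = 0 ∧ d 1 = 1 := by omega
  have h3 : d 2 = 1 ∧ d 3 = 0 ∨ d 2 = 0 ∧ d 3 = 1 := by omega
  rcases h0 with ⟨ha, hb⟩ | ⟨ha, hb⟩ <;> rcases h3 with ⟨hc, hd⟩ | ⟨hc, hd⟩
  · exact Or.inl (by ext i; fin_cases i <;> simp [e02, Finsupp.single_apply, ha, hb, hc, hd])
  · exact Or.inr (Or.inl (by ext i; fin_cases i <;> simp [e03, Finsupp.single_apply, ha, hb, hc, hd]))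
  · exact Or.inr (Or.inr (Or.inl (by ext i; fin_cases i <;> simp [e12, Finsupp.single_apply, ha, hb, hc, hd])))
  · exact Or.inr (Or.inr (Or.inr (by ext i; fin_cases i <;> simp [e13, Finsupp.single_apply, ha, hb, hc, hd])))

private lemma monom_eq (i j : Fin 4) (A : ℂ) :
    C A * X i * X j = monomial (Finsupp.single i 1 + Finsupp.single j 1) A := by
  rw [C_mul_X_eq_monomial]
  rw [X, monomial_mul]
  simp

example : True := trivial

private lemma e_ne_1 : e02 ≠ e03 := by
  intro h
  have := congrArg (fun f => f 2) h
  simp [e02, e03, Finsupp.single_apply] at this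

private lemma e_ne_2 : e02 ≠ e12 := by
  intro h
  have := congrArg (fun f => f 0) h
  simp [e02, e12, Finsupp.single_apply] at this

private lemma e_ne_3 : e02 ≠ e13 := by
  intro h
  have := congrArg (fun f => f 0) h
  simp [e02, e13, Finsupp.single_apply] at this

private lemma e_ne_4 : e03 ≠ e12 := by
  intro h
  have := congrArg (fun f => f 0) h
  simp [e03, e12, Finsupp.single_apply] at this

private lemma e_ne_5 : e03 ≠ e13 := by
  intro h
  have := congrArg (fun f => f 0) h
  simp [e03, e13, Finsupp.single_apply] at this

private lemma e_ne_6 : e12 ≠ e13 := by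
  intro h
  have := congrArg (fun f => f 2) h
  simp [e12, e13, Finsupp.single_apply] at this

private lemma bihom_repr (P : C4) (hP : IsBihom 1 1 P) :
    P = C (coeff e02 P) * X 0 * X 2 + C (coeff e03 P) * X 0 * X 3
      + C (coeff e12 P) * X 1 * X 2 + C (coeff e13 P) * X 1 * X 3 := by
  have h02 : C (coeff e02 P) * X (0:Fin 4) * X 2 = monomial e02 (coeff e02 P) := monom_eq 0 2 _
  have h03 : C (coeff e03 P) * X (0:Fin 4) * X 3 = monomial e03 (coeff e03 P) := monom_eq 0 3 _
  have h12 : C (coeff e12 P) * X (1:Fin 4) * X 2 = monomial e12 (coeff e12 P) := monom_eq 1 2 _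
  have h13 : C (coeff e13 P) * X (1:Fin 4) * X 3 = monomial e13 (coeff e13 P) := monom_eq 1 3 _
  ext m
  rw [h02, h03, h12, h13]
  show coeff m P = _
  rw [coeff_add, coeff_add, coeff_add, coeff_monomial, coeff_monomial, coeff_monomial, coeff_monomial]
  by_cases hm : m ∈ P.support
  · obtain h | h | h | h := bihom_classify m (hP m hm).1 (hP m hm).2 <;> subst h <;>
      simp [e_ne_1, e_ne_2, e_ne_3, e_ne_4, e_ne_5, e_ne_6,
        Ne.symm e_ne_1, Ne.symm e_ne_2, Ne.symm e_ne_3, Ne.symm e_ne_4,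
        Ne.symm e_ne_5, Ne.symm e_ne_6]
  · rw [notMem_support_iff.mp hm]
    have h0 : ∀ e : Fin 4 →₀ ℕ, (e = m → coeff e P = 0) → (if e = m then coeff e P else 0) = 0 := by
      intro e he
      split_ifs with h
      · exact he h
      · rfl
    have hz : ∀ e : Fin 4 →₀ ℕ, e = m → coeff e P = 0 := by
      intro e he; subst he; exact notMem_support_iff.mp hm
    rw [h0 _ (hz _), h0 _ (hz _), h0 _ (hz _), h0 _ (hz _)]
    simp

private lemma eval_formula (P : C4) (a b c d : ℂ)
    (hPr : P = C a * X 0 * X 2 + C b * X 0 * X 3 + C c * X 1 * X 2 + C d * X 1 * X 3)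
    (v w : ℂ × ℂ) :
    evalP P v w = a*v.1*w.1 + b*v.1*w.2 + c*v.2*w.1 + d*v.2*w.2 := by
  rw [evalP, hPr]
  simp [Matrix.cons_val_zero, Matrix.cons_val_one]

private lemma not_unit_of_cc (D : C4) (h : constantCoeff D = 0) : ¬ IsUnit D := by
  intro hu
  have h2 := hu.map constantCoeff
  rw [h] at h2
  exact not_isUnit_zero h2

private lemma bihom_not_unit (P : C4) (hP : IsBihom 1 1 P) : ¬ IsUnit P := by
  apply not_unit_of_cc
  rw [constantCoeff_eq]
  by_contra h
  have h0 : (0 : Fin 4 →₀ ℕ) ∈ P.support := by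
    rw [mem_support_iff]; exact h
  have := (hP 0 h0).1
  simp at this

private lemma resultant_ne_zero
    (P Q : C4) (hPbi : IsBihom 1 1 P) (hQbi : IsBihom 1 1 Q)
    (a b c d a' b' c' d' : ℂ)
    (hPr : P = C a * X 0 * X 2 + C b * X 0 * X 3 + C c * X 1 * X 2 + C d * X 1 * X 3)
    (hQr : Q = C a' * X 0 * X 2 + C b' * X 0 * X 3 + C c' * X 1 * X 2 + C d' * X 1 * X 3)
    (hcop : ∀ D : C4, D ∣ P → D ∣ Q → IsUnit D) :
    ¬ (a*b' - b*a' = 0 ∧ a*d' - d*a' + c*b' - b*c' = 0 ∧ c*d' - d*c' = 0) := by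
  rintro ⟨h0, h1, h2⟩
  by_cases hP0 : a = 0 ∧ b = 0 ∧ c = 0 ∧ d = 0
  · obtain ⟨rfl, rfl, rfl, rfl⟩ := hP0
    have hP0' : P = 0 := by rw [hPr]; simp
    exact bihom_not_unit Q hQbi (hcop Q (hP0' ▸ dvd_zero Q) dvd_rfl)
  by_cases hQ0 : a' = 0 ∧ b' = 0 ∧ c' = 0 ∧ d' = 0
  · obtain ⟨rfl, rfl, rfl, rfl⟩ := hQ0
    have hQ0' : Q = 0 := by rw [hQr]; simp
    exact bihom_not_unit P hPbi (hcop P dvd_rfl (hQ0' ▸ dvd_zero P))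
  by_cases hl1 : a = 0 ∧ c = 0
  · obtain ⟨rfl, rfl⟩ := hl1
    have hac : a' = 0 ∧ c' = 0 := by
      by_cases hb : b = 0
      · subst hb
        have hd : d ≠ 0 := by tauto
        constructor
        · have : d * a' = 0 := by linear_combination -h1
          exact (mul_eq_zero.mp this).resolve_left hd
        · have : d * c' = 0 := by linear_combination -h2
          exact (mul_eq_zero.mp this).resolve_left hd
      · have ha' : a' = 0 := by
          have : b * a' = 0 := by linear_combination -h0
          exact (mul_eq_zero.mp this).resolve_left hb
        refine ⟨ha', ?_⟩
        have : b * c' = 0 := by linear_combination -h1 - d*ha'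
        exact (mul_eq_zero.mp this).resolve_left hb
    obtain ⟨ha', hc'⟩ := hac
    have hdP : (X 3 : C4) ∣ P := dvd_def.mpr
      ⟨C b * X 0 + C d * X 1, by rw [hPr]; simp only [C_0, zero_mul]; ring⟩
    have hdQ : (X 3 : C4) ∣ Q := dvd_def.mpr
      ⟨C b' * X 0 + C d' * X 1, by rw [hQr, ha', hc']; simp only [C_0, zero_mul]; ring⟩
    exact not_unit_of_cc _ (by simp) (hcop _ hdP hdQ)
  by_cases hdet : a*d - b*c = 0
  · obtain ⟨k, hb, hd⟩ := propor a c b d (by linear_combination hdet) hl1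
    have e0 : a * (b' - k*a') = 0 := by linear_combination h0 + a'*hb
    have e2 : c * (d' - k*c') = 0 := by linear_combination h2 + c'*hd
    have e1 : a * (d' - k*c') + c * (b' - k*a') = 0 := by
      linear_combination h1 + a'*hd + c'*hb
    have hbd' : b' = k*a' ∧ d' = k*c' := by
      by_cases ha : a = 0
      · subst ha
        have hc : c ≠ 0 := fun hc => hl1 ⟨rfl, hc⟩
        have hd' : d' - k*c' = 0 := (mul_eq_zero.mp e2).resolve_left hc
        have hb' : b' - k*a' = 0 := by
          have : c * (b' - k*a') = 0 := by linear_combination e1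
          exact (mul_eq_zero.mp this).resolve_left hc
        exact ⟨by linear_combination hb', by linear_combination hd'⟩
      · have hb' : b' - k*a' = 0 := (mul_eq_zero.mp e0).resolve_left ha
        have hd' : d' - k*c' = 0 := by
          have : a * (d' - k*c') = 0 := by linear_combination e1 - c*hb'
          exact (mul_eq_zero.mp this).resolve_left ha
        exact ⟨by linear_combination hb', by linear_combination hd'⟩
    obtain ⟨hb', hd'⟩ := hbd'
    have hdP : (X 2 + C k * X 3 : C4) ∣ P := dvd_def.mpr
      ⟨C a * X 0 + C c * X 1, by rw [hPr, hb, hd, C_mul, C_mul]; ring⟩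
    have hdQ : (X 2 + C k * X 3 : C4) ∣ Q := dvd_def.mpr
      ⟨C a' * X 0 + C c' * X 1, by rw [hQr, hb', hd', C_mul, C_mul]; ring⟩
    exact not_unit_of_cc _ (by simp) (hcop _ hdP hdQ)
  · have hab : ¬(a = 0 ∧ b = 0) := by
      rintro ⟨rfl, rfl⟩; exact hdet (by ring)
    have hcd : ¬(c = 0 ∧ d = 0) := by
      rintro ⟨rfl, rfl⟩; exact hdet (by ring)
    obtain ⟨α, ha', hb'⟩ := propor a b a' b' (by linear_combination h0) hab
    obtain ⟨γ, hc', hd'⟩ := propor c d c' d' (by linear_combination h2) hcd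
    have hγα : γ = α := by
      have h3 : (γ - α) * (a*d - b*c) = 0 := by
        linear_combination h1 - a*hd' + d*ha' - c*hb' + b*hc'
      have h4 := (mul_eq_zero.mp h3).resolve_right hdet
      linear_combination h4
    subst hγα
    have hQP : P ∣ Q := dvd_def.mpr
      ⟨C γ, by rw [hQr, hPr, ha', hb', hc', hd', C_mul, C_mul, C_mul, C_mul]; ring⟩
    exact bihom_not_unit P hPbi (hcop P dvd_rfl hQP)

private lemma rows_contra
    (P Q : C4) (a b c d a' b' c' d' : ℂ)
    (hPr : P = C a * X 0 * X 2 + C b * X 0 * X 3 + C c * X 1 * X 2 + C d * X 1 * X 3)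
    (hQr : Q = C a' * X 0 * X 2 + C b' * X 0 * X 3 + C c' * X 1 * X 2 + C d' * X 1 * X 3)
    (hcop : ∀ D : C4, D ∣ P → D ∣ Q → IsUnit D)
    (s t : ℂ) (hst : ¬(s = 0 ∧ t = 0))
    (h1 : a*s + c*t = 0) (h2 : b*s + d*t = 0)
    (h3 : a'*s + c'*t = 0) (h4 : b'*s + d'*t = 0) : False := by
  have hst' : ¬(t = 0 ∧ -s = 0) := by
    rintro ⟨ht, hs⟩
    exact hst ⟨by linear_combination -hs, ht⟩
  obtain ⟨α, ha, hc⟩ := propor t (-s) a c (by linear_combination h1) hst'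
  obtain ⟨β, hb, hd⟩ := propor t (-s) b d (by linear_combination h2) hst'
  obtain ⟨α', ha', hc'⟩ := propor t (-s) a' c' (by linear_combination h3) hst'
  obtain ⟨β', hb', hd'⟩ := propor t (-s) b' d' (by linear_combination h4) hst'
  have hdP : (C t * X 0 - C s * X 1 : C4) ∣ P := dvd_def.mpr
    ⟨C α * X 2 + C β * X 3, by
      rw [hPr, ha, hb, hc, hd]
      simp only [C_mul, map_neg]
      ring⟩
  have hdQ : (C t * X 0 - C s * X 1 : C4) ∣ Q := dvd_def.mpr
    ⟨C α' * X 2 + C β' * X 3, by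
      rw [hQr, ha', hb', hc', hd']
      simp only [C_mul, map_neg]
      ring⟩
  exact not_unit_of_cc _ (by simp) (hcop _ hdP hdQ)

/-- Bezout on ℙ¹×ℙ¹: two bidegree (1,1) polynomials with no common non-unit
factor have at most 2 common zeros in ℙ¹×ℙ¹. -/
theorem bezout_one_one_curves
    (P Q : C4) (hP : IsBihom 1 1 P) (hQ : IsBihom 1 1 Q)
    (hcop : ∀ D : C4, D ∣ P → D ∣ Q → IsUnit D) :
    ∃ z₁ z₂ : P1 × P1, ∀ p : P1 × P1,
      VanishesAt P p.1 p.2 → VanishesAt Q p.1 p.2 → p = z₁ ∨ p = z₂ := by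
  classical
  obtain ⟨a, b, c, d, hPr⟩ : ∃ a b c d : ℂ,
      P = C a * X 0 * X 2 + C b * X 0 * X 3 + C c * X 1 * X 2 + C d * X 1 * X 3 :=
    ⟨_, _, _, _, bihom_repr P hP⟩
  obtain ⟨a', b', c', d', hQr⟩ : ∃ a' b' c' d' : ℂ,
      Q = C a' * X 0 * X 2 + C b' * X 0 * X 3 + C c' * X 1 * X 2 + C d' * X 1 * X 3 :=
    ⟨_, _, _, _, bihom_repr Q hQ⟩
  have hPe := eval_formula P a b c d hPr
  have hQe := eval_formula Q a' b' c' d' hQr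
  -- distinct common zeros have distinct first components
  have inj : ∀ p q : P1 × P1, VanishesAt P p.1 p.2 → VanishesAt Q p.1 p.2 →
      VanishesAt P q.1 q.2 → VanishesAt Q q.1 q.2 → p ≠ q → p.1 ≠ q.1 := by
    intro p q hpP hpQ hqP hqQ hne hx
    have hy : p.2 ≠ q.2 := fun hy => hne (Prod.ext hx hy)
    have hv : p.1.rep ≠ 0 := Projectivization.rep_nonzero _
    have hw1 : p.2.rep ≠ 0 := Projectivization.rep_nonzero _
    have hw2 : q.2.rep ≠ 0 := Projectivization.rep_nonzero _
    have hdw : p.2.rep.1 * q.2.rep.2 - p.2.rep.2 * q.2.rep.1 ≠ 0 := by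
      intro h
      apply hy
      rw [← Projectivization.mk_rep p.2, ← Projectivization.mk_rep q.2]
      exact mk_eq_mk_of_det _ _ hw1 hw2 h
    have E1 : evalP P p.1.rep p.2.rep = 0 :=
      hpP _ _ hv hw1 (Projectivization.mk_rep _) (Projectivization.mk_rep _)
    have E2 : evalP P p.1.rep q.2.rep = 0 :=
      hqP _ _ hv hw2 ((Projectivization.mk_rep _).trans hx) (Projectivization.mk_rep _)
    have E3 : evalP Q p.1.rep p.2.rep = 0 :=
      hpQ _ _ hv hw1 (Projectivization.mk_rep _) (Projectivization.mk_rep _)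
    have E4 : evalP Q p.1.rep q.2.rep = 0 :=
      hqQ _ _ hv hw2 ((Projectivization.mk_rep _).trans hx) (Projectivization.mk_rep _)
    rw [hPe] at E1 E2
    rw [hQe] at E3 E4
    have hA := kill2 (a*p.1.rep.1 + c*p.1.rep.2) (b*p.1.rep.1 + d*p.1.rep.2)
      p.2.rep.1 p.2.rep.2 q.2.rep.1 q.2.rep.2
      (by linear_combination E1) (by linear_combination E2) hdw
    have hB := kill2 (a'*p.1.rep.1 + c'*p.1.rep.2) (b'*p.1.rep.1 + d'*p.1.rep.2)
      p.2.rep.1 p.2.rep.2 q.2.rep.1 q.2.rep.2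
      (by linear_combination E3) (by linear_combination E4) hdw
    exact rows_contra P Q a b c d a' b' c' d' hPr hQr hcop p.1.rep.1 p.1.rep.2
      (fun h => hv (Prod.ext h.1 h.2)) hA.1 hA.2 hB.1 hB.2
  -- every common zero satisfies the resultant equation
  have quad : ∀ p : P1 × P1, VanishesAt P p.1 p.2 → VanishesAt Q p.1 p.2 →
      (a*b' - b*a') * p.1.rep.1^2 + (a*d' - d*a' + c*b' - b*c') * (p.1.rep.1 * p.1.rep.2)
        + (c*d' - d*c') * p.1.rep.2^2 = 0 := by
    intro p hpP hpQ
    have hv : p.1.rep ≠ 0 := Projectivization.rep_nonzero _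
    have hw : p.2.rep ≠ 0 := Projectivization.rep_nonzero _
    have EP : evalP P p.1.rep p.2.rep = 0 :=
      hpP _ _ hv hw (Projectivization.mk_rep _) (Projectivization.mk_rep _)
    have EQ : evalP Q p.1.rep p.2.rep = 0 :=
      hpQ _ _ hv hw (Projectivization.mk_rep _) (Projectivization.mk_rep _)
    rw [hPe] at EP
    rw [hQe] at EQ
    have hdz := detzero (a*p.1.rep.1 + c*p.1.rep.2) (b*p.1.rep.1 + d*p.1.rep.2)
      (a'*p.1.rep.1 + c'*p.1.rep.2) (b'*p.1.rep.1 + d'*p.1.rep.2) p.2.rep.1 p.2.rep.2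
      (by linear_combination EP) (by linear_combination EQ)
      (fun h => hw (Prod.ext h.1 h.2))
    linear_combination hdz
  -- no three pairwise distinct common zeros
  have key : ∀ p₁ p₂ p₃ : P1 × P1,
      VanishesAt P p₁.1 p₁.2 → VanishesAt Q p₁.1 p₁.2 →
      VanishesAt P p₂.1 p₂.2 → VanishesAt Q p₂.1 p₂.2 →
      VanishesAt P p₃.1 p₃.2 → VanishesAt Q p₃.1 p₃.2 →
      p₁ ≠ p₂ → p₁ ≠ p₃ → p₂ ≠ p₃ → False := by
    intro p₁ p₂ p₃ h1P h1Q h2P h2Q h3P h3Q h12 h13 h23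
    have dx12 := inj _ _ h1P h1Q h2P h2Q h12
    have dx13 := inj _ _ h1P h1Q h3P h3Q h13
    have dx23 := inj _ _ h2P h2Q h3P h3Q h23
    set s1 := p₁.1.rep.1 with hs1
    set t1 := p₁.1.rep.2 with ht1
    set s2 := p₂.1.rep.1 with hs2
    set t2 := p₂.1.rep.2 with ht2
    set s3 := p₃.1.rep.1 with hs3
    set t3 := p₃.1.rep.2 with ht3
    have hdet : ∀ (x y : P1), x ≠ y → x.rep.1 * y.rep.2 - x.rep.2 * y.rep.1 ≠ 0 := by
      intro x y hxy h
      apply hxy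
      rw [← Projectivization.mk_rep x, ← Projectivization.mk_rep y]
      exact mk_eq_mk_of_det _ _ (Projectivization.rep_nonzero _)
        (Projectivization.rep_nonzero _) h
    have det12 : s1*t2 - t1*s2 ≠ 0 := hdet _ _ dx12
    have det13 : s1*t3 - t1*s3 ≠ 0 := hdet _ _ dx13
    have det23 : s2*t3 - t2*s3 ≠ 0 := hdet _ _ dx23
    have E1 := quad p₁ h1P h1Q
    have E2 := quad p₂ h2P h2Q
    have E3 := quad p₃ h3P h3Q
    rw [← hs1, ← ht1] at E1
    rw [← hs2, ← ht2] at E2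
    rw [← hs3, ← ht3] at E3
    have hD : (s1*t2 - t1*s2) * (s1*t3 - t1*s3) * (s2*t3 - t2*s3) ≠ 0 :=
      mul_ne_zero (mul_ne_zero det12 det13) det23
    have hr0 : a*b' - b*a' = 0 := by
      have h : ((s1*t2 - t1*s2) * (s1*t3 - t1*s3) * (s2*t3 - t2*s3)) * (a*b' - b*a') = 0 := by
        linear_combination (s2*t2*t3^2 - t2^2*s3*t3) * E1 - (s1*t1*t3^2 - t1^2*s3*t3) * E2
          + (s1*t1*t2^2 - t1^2*s2*t2) * E3
      exact (mul_eq_zero.mp h).resolve_left hD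
    have hr1 : a*d' - d*a' + c*b' - b*c' = 0 := by
      have h : ((s1*t2 - t1*s2) * (s1*t3 - t1*s3) * (s2*t3 - t2*s3))
          * (a*d' - d*a' + c*b' - b*c') = 0 := by
        linear_combination (-(s2^2*t3^2 - t2^2*s3^2)) * E1 + (s1^2*t3^2 - t1^2*s3^2) * E2
          - (s1^2*t2^2 - t1^2*s2^2) * E3
      exact (mul_eq_zero.mp h).resolve_left hD
    have hr2 : c*d' - d*c' = 0 := by
      have h : ((s1*t2 - t1*s2) * (s1*t3 - t1*s3) * (s2*t3 - t2*s3)) * (c*d' - d*c') = 0 := by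
        linear_combination (s2^2*s3*t3 - s2*t2*s3^2) * E1 - (s1^2*s3*t3 - s1*t1*s3^2) * E2
          + (s1^2*s2*t2 - s1*t1*s2^2) * E3
      exact (mul_eq_zero.mp h).resolve_left hD
    exact resultant_ne_zero P Q hP hQ a b c d a' b' c' d' hPr hQr hcop ⟨hr0, hr1, hr2⟩
  -- wrap up
  by_cases hex2 : ∃ z₁ z₂ : P1 × P1, (VanishesAt P z₁.1 z₁.2 ∧ VanishesAt Q z₁.1 z₁.2)
      ∧ (VanishesAt P z₂.1 z₂.2 ∧ VanishesAt Q z₂.1 z₂.2) ∧ z₁ ≠ z₂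
  · obtain ⟨z₁, z₂, ⟨hz1P, hz1Q⟩, ⟨hz2P, hz2Q⟩, hne⟩ := hex2
    refine ⟨z₁, z₂, fun p hp1 hp2 => ?_⟩
    by_contra hc
    push_neg at hc
    exact key p z₁ z₂ hp1 hp2 hz1P hz1Q hz2P hz2Q hc.1 hc.2 hne
  · push_neg at hex2
    by_cases hex1 : ∃ z : P1 × P1, VanishesAt P z.1 z.2 ∧ VanishesAt Q z.1 z.2
    · obtain ⟨z, hzP, hzQ⟩ := hex1
      refine ⟨z, z, fun p hp1 hp2 => Or.inl ?_⟩
      exact hex2 p z ⟨hp1, hp2⟩ ⟨hzP, hzQ⟩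
    · push_neg at hex1
      have h10 : ((1 : ℂ), (0 : ℂ)) ≠ 0 := by
        intro h
        rw [Prod.ext_iff] at h
        exact one_ne_zero h.1
      refine ⟨(Projectivization.mk ℂ _ h10, Projectivization.mk ℂ _ h10),
        (Projectivization.mk ℂ _ h10, Projectivization.mk ℂ _ h10),
        fun p hp1 hp2 => absurd hp2 (hex1 p hp1)⟩
end
end

section
/- Let S and T be any types and let A be a set of 5 points in S × T. Suppose that for each s ∈ S at most 2 points of A have first coordinate s, for each t ∈ T at most 2 points of A have second coordinate t, and every point of A shares its first coordinate or its second coordinate with at least one other point of A. Then there exist s ∈ S and t ∈ T such that at least 4 points of A have first coordinate equal to s or second coordinate equal to t. -/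
/-- No set of cardinality at most 2 contains three distinct elements. -/
lemma no_three_aux {α : Type*} {L : Set α} (hfin : L.Finite) (hL : L.ncard ≤ 2)
    {p q r : α} (hp : p ∈ L) (hq : q ∈ L) (hr : r ∈ L)
    (hpq : p ≠ q) (hpr : p ≠ r) (hqr : q ≠ r) : False := by
  have hsub : ({p, q, r} : Set α) ⊆ L := by
    intro x hx
    rcases hx with rfl | rfl | rfl
    · exact hp
    · exact hq
    · exact hr
  have h3 : ({p, q, r} : Set α).ncard = 3 :=
    Set.ncard_eq_three.mpr ⟨p, q, r, hpq, hpr, hqr, rfl⟩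
  have := Set.ncard_le_ncard hsub hfin
  omega

/-- Parity-type lemma: a 5-element set cannot be covered by an equivalence-like
relation whose classes (within the set) have at most 2 elements, with every element
related to another one. -/
lemma five_parity_aux {α : Type*} {A : Set α} (hfin : A.Finite) (hA : A.ncard = 5)
    (R : α → α → Prop) (hsymm : ∀ a b, R a b → R b a)
    (htrans : ∀ a b c, R a b → R b c → R a c)
    (hline : ∀ p ∈ A, {q ∈ A | R q p}.ncard ≤ 2)
    (hpart : ∀ p ∈ A, ∃ q ∈ A, q ≠ p ∧ R q p) : False := by
  have lfin : ∀ p : α, ({q ∈ A | R q p}).Finite := fun p => hfin.subset (Set.sep_subset _ _)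
  -- pick a
  obtain ⟨a, ha⟩ := Set.nonempty_of_ncard_ne_zero (by omega : A.ncard ≠ 0)
  obtain ⟨b, hb, hba, hRba⟩ := hpart a ha
  -- the remaining three points
  have hab_sub : ({a, b} : Set α) ⊆ A := by
    intro x hx; rcases hx with rfl | rfl; exacts [ha, hb]
  have hd2 : (A \ {a, b}).ncard = 3 := by
    rw [Set.ncard_diff hab_sub (hfin.subset hab_sub), hA, Set.ncard_pair (Ne.symm hba)]
  obtain ⟨c, hc⟩ := Set.nonempty_of_ncard_ne_zero (by omega : (A \ {a, b}).ncard ≠ 0)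
  have hcA : c ∈ A := hc.1
  have hca : c ≠ a := by intro h; exact hc.2 (by simp [h])
  have hcb : c ≠ b := by intro h; exact hc.2 (by simp [h])
  obtain ⟨d, hd, hdc, hRdc⟩ := hpart c hcA
  -- d is not a, b, or c
  have hRab : R a b := hsymm _ _ hRba
  have hda : d ≠ a := by
    intro hh
    rw [hh] at hRdc
    -- then a, b, c all lie on the R-class of c
    exact no_three_aux (lfin c) (hline c hcA) (p := a) (q := b) (r := c)
      ⟨ha, hRdc⟩ ⟨hb, htrans _ _ _ hRba hRdc⟩
      ⟨hcA, htrans _ _ _ (hsymm _ _ hRdc) hRdc⟩ (Ne.symm hba) (Ne.symm hca) (Ne.symm hcb)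
  have hdb : d ≠ b := by
    intro hh
    rw [hh] at hRdc
    exact no_three_aux (lfin c) (hline c hcA) (p := a) (q := b) (r := c)
      ⟨ha, htrans _ _ _ hRab hRdc⟩ ⟨hb, hRdc⟩
      ⟨hcA, htrans _ _ _ (hsymm _ _ hRdc) hRdc⟩ (Ne.symm hba) (Ne.symm hca) (Ne.symm hcb)
  have hdA : d ∈ A := hd
  have habcd_sub : ({a, b, c, d} : Set α) ⊆ A := by
    intro x hx; rcases hx with rfl | rfl | rfl | rfl; exacts [ha, hb, hcA, hdA]
  have habcd_card : ({a, b, c, d} : Set α).ncard = 4 := by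
    rw [Set.ncard_insert_of_notMem (by simp [Ne.symm hba, hca.symm, hda.symm])
        ((Set.finite_singleton d).insert c |>.insert b),
      Set.ncard_insert_of_notMem (by simp [hcb.symm, hdb.symm])
        ((Set.finite_singleton d).insert c),
      Set.ncard_insert_of_notMem (by simp [Ne.symm hdc]) (Set.finite_singleton d),
      Set.ncard_singleton]
  have hd1 : (A \ {a, b, c, d}).ncard = 1 := by
    rw [Set.ncard_diff habcd_sub (hfin.subset habcd_sub), hA, habcd_card]
  obtain ⟨e, he⟩ := Set.ncard_eq_one.mp hd1
  have heA : e ∈ A := by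
    have : e ∈ A \ {a, b, c, d} := by rw [he]; rfl
    exact this.1
  have heabcd : e ∉ ({a, b, c, d} : Set α) := by
    have : e ∈ A \ {a, b, c, d} := by rw [he]; rfl
    exact this.2
  have hea : e ≠ a := fun h => heabcd (by simp [h])
  have heb : e ≠ b := fun h => heabcd (by simp [h])
  have hec : e ≠ c := fun h => heabcd (by simp [h])
  have hed : e ≠ d := fun h => heabcd (by simp [h])
  obtain ⟨f, hfA, hfe, hRfe⟩ := hpart e heA
  have hRcd : R c d := hsymm _ _ hRdc
  have hRee : R e e := htrans _ _ _ (hsymm _ _ hRfe) hRfe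
  have hfa : f ≠ a := by
    intro hh
    rw [hh] at hRfe
    exact no_three_aux (lfin e) (hline e heA) (p := a) (q := b) (r := e)
      ⟨ha, hRfe⟩ ⟨hb, htrans _ _ _ hRba hRfe⟩ ⟨heA, hRee⟩ (Ne.symm hba) hea.symm heb.symm
  have hfb : f ≠ b := by
    intro hh
    rw [hh] at hRfe
    exact no_three_aux (lfin e) (hline e heA) (p := a) (q := b) (r := e)
      ⟨ha, htrans _ _ _ hRab hRfe⟩ ⟨hb, hRfe⟩ ⟨heA, hRee⟩ (Ne.symm hba) hea.symm heb.symm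
  have hfc : f ≠ c := by
    intro hh
    rw [hh] at hRfe
    exact no_three_aux (lfin e) (hline e heA) (p := c) (q := d) (r := e)
      ⟨hcA, hRfe⟩ ⟨hdA, htrans _ _ _ hRdc hRfe⟩ ⟨heA, hRee⟩ hdc.symm hec.symm hed.symm
  have hfd : f ≠ d := by
    intro hh
    rw [hh] at hRfe
    exact no_three_aux (lfin e) (hline e heA) (p := c) (q := d) (r := e)
      ⟨hcA, htrans _ _ _ hRcd hRfe⟩ ⟨hdA, hRfe⟩ ⟨heA, hRee⟩ hdc.symm hec.symm hed.symm
  have : f ∈ A \ ({a, b, c, d} : Set α) := ⟨hfA, by simp [hfa, hfb, hfc, hfd]⟩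
  rw [he] at this
  exact hfe this

/-- Combinatorial configuration lemma: if `A` is a set of 5 points in `S × T` such that
every vertical line (fixed first coordinate) contains at most 2 points of `A`, every
horizontal line (fixed second coordinate) contains at most 2 points of `A`, and every
point of `A` shares its first or second coordinate with another point of `A`, then some
vertical line and some horizontal line together contain at least 4 points of `A`. -/
theorem five_points_config {S T : Type*} (A : Set (S × T)) (hA : A.ncard = 5)
    (h1 : ∀ s : S, {p ∈ A | p.1 = s}.ncard ≤ 2)
    (h2 : ∀ t : T, {p ∈ A | p.2 = t}.ncard ≤ 2)
    (h3 : ∀ p ∈ A, ∃ q ∈ A, q ≠ p ∧ (q.1 = p.1 ∨ q.2 = p.2)) :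
    ∃ (s : S) (t : T), 4 ≤ {p ∈ A | p.1 = s ∨ p.2 = t}.ncard := by
  have hfin : A.Finite := by
    by_contra h
    rw [Set.Infinite.ncard h] at hA
    omega
  have vfin : ∀ s : S, ({p ∈ A | p.1 = s}).Finite := fun s => hfin.subset (Set.sep_subset _ _)
  have hfin2 : ∀ t : T, ({p ∈ A | p.2 = t}).Finite := fun t => hfin.subset (Set.sep_subset _ _)
  -- there is a vertical pair
  have hvert : ∃ p ∈ A, ∃ q ∈ A, q ≠ p ∧ q.1 = p.1 := by
    by_contra hno
    push_neg at hno
    refine five_parity_aux hfin hA (fun x y => x.2 = y.2) (fun a b h => h.symm)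
      (fun a b c hab hbc => hab.trans hbc) (fun p _ => h2 p.2) (fun p hp => ?_)
    obtain ⟨q, hq, hne, hor⟩ := h3 p hp
    rcases hor with h | h
    · exact absurd h (hno p hp q hq hne)
    · exact ⟨q, hq, hne, h⟩
  -- there is a horizontal pair
  have hhor : ∃ r ∈ A, ∃ u ∈ A, u ≠ r ∧ u.2 = r.2 := by
    by_contra hno
    push_neg at hno
    refine five_parity_aux hfin hA (fun x y => x.1 = y.1) (fun a b h => h.symm)
      (fun a b c hab hbc => hab.trans hbc) (fun p _ => h1 p.1) (fun p hp => ?_)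
    obtain ⟨q, hq, hne, hor⟩ := h3 p hp
    rcases hor with h | h
    · exact ⟨q, hq, hne, h⟩
    · exact absurd h (hno p hp q hq hne)
  -- key claim: there are a vertical pair and a horizontal pair that are disjoint
  have key : ∃ p ∈ A, ∃ q ∈ A, ∃ r ∈ A, ∃ u ∈ A,
      q ≠ p ∧ q.1 = p.1 ∧ u ≠ r ∧ u.2 = r.2 ∧ p ≠ r ∧ p ≠ u ∧ q ≠ r ∧ q ≠ u := by
    by_contra hno
    have hmeet : ∀ p ∈ A, ∀ q ∈ A, ∀ r ∈ A, ∀ u ∈ A, q ≠ p → q.1 = p.1 → u ≠ r →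
        u.2 = r.2 → p = r ∨ p = u ∨ q = r ∨ q = u := by
      intro p hp q hq r hr u hu h₁ h₂ h₃ h₄
      by_contra hc
      push_neg at hc
      exact hno ⟨p, hp, q, hq, r, hr, u, hu, h₁, h₂, h₃, h₄, hc.1, hc.2.1, hc.2.2.1, hc.2.2.2⟩
    obtain ⟨p0, hp0, q0, hq0, hne1, heq1⟩ := hvert
    obtain ⟨r0, hr0, u0, hu0, hne2, heq2⟩ := hhor
    -- extract a "center" point q with vertical partner p and horizontal partner u
    obtain ⟨q, hqA, p, hpA, u, huA, hpq, heqv, huq, heqh⟩ :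
        ∃ q ∈ A, ∃ p ∈ A, ∃ u ∈ A, p ≠ q ∧ p.1 = q.1 ∧ u ≠ q ∧ u.2 = q.2 := by
      rcases hmeet p0 hp0 q0 hq0 r0 hr0 u0 hu0 hne1 heq1 hne2 heq2 with h | h | h | h
      · exact ⟨p0, hp0, q0, hq0, u0, hu0, hne1, heq1, h ▸ hne2, h ▸ heq2⟩
      · exact ⟨p0, hp0, q0, hq0, r0, hr0, hne1, heq1,
          fun hh => hne2 (h.symm.trans hh.symm), by rw [← heq2, h]⟩
      · exact ⟨q0, hq0, p0, hp0, u0, hu0, Ne.symm hne1, heq1.symm,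
          fun hh => hne2 (hh.trans h), by rw [heq2, h]⟩
      · exact ⟨q0, hq0, p0, hp0, r0, hr0, Ne.symm hne1, heq1.symm,
          fun hh => hne2 (h.symm.trans hh.symm), by rw [← heq2, ← h]⟩
    have hpu : p ≠ u := by
      rintro rfl
      exact hpq (Prod.ext heqv heqh)
    -- the remaining two points
    have hpqu_sub : ({p, q, u} : Set (S × T)) ⊆ A := by
      intro x hx; rcases hx with rfl | rfl | rfl; exacts [hpA, hqA, huA]
    have hpqu_card : ({p, q, u} : Set (S × T)).ncard = 3 :=
      Set.ncard_eq_three.mpr ⟨p, q, u, hpq, hpu, Ne.symm huq, rfl⟩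
    have hd2 : (A \ {p, q, u}).ncard = 2 := by
      rw [Set.ncard_diff hpqu_sub (hfin.subset hpqu_sub), hA, hpqu_card]
    obtain ⟨v, w, hvw, hset⟩ := Set.ncard_eq_two.mp hd2
    have hv : v ∈ A \ ({p, q, u} : Set (S × T)) := by rw [hset]; exact Or.inl rfl
    have hw : w ∈ A \ ({p, q, u} : Set (S × T)) := by rw [hset]; exact Or.inr rfl
    have hvA : v ∈ A := hv.1
    have hwA : w ∈ A := hw.1
    have hvp : v ≠ p := fun h => hv.2 (by simp [h])
    have hvq : v ≠ q := fun h => hv.2 (by simp [h])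
    have hvu : v ≠ u := fun h => hv.2 (by simp [h])
    have hwp : w ≠ p := fun h => hw.2 (by simp [h])
    have hwq : w ≠ q := fun h => hw.2 (by simp [h])
    have hwu : w ≠ u := fun h => hw.2 (by simp [h])
    -- each of v, w is either vertically paired with u or horizontally paired with p
    have claim : ∀ x ∈ A, x ≠ p → x ≠ q → x ≠ u → x.1 = u.1 ∨ x.2 = p.2 := by
      intro x hx hxp hxq hxu
      obtain ⟨y, hyA, hyx, hor⟩ := h3 x hx
      rcases hor with h | h
      · -- vertical pair (x, y) must meet horizontal pair (q, u)
        rcases hmeet x hx y hyA q hqA u huA hyx h huq heqh with hh | hh | hh | hh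
        · exact absurd hh hxq
        · exact absurd hh hxu
        · -- y = q : then p, q, x are three points on the vertical line of q
          exfalso
          refine no_three_aux (vfin q.1) (h1 q.1) (p := p) (q := q) (r := x)
            ⟨hpA, heqv⟩ ⟨hqA, rfl⟩ ⟨hx, ?_⟩ hpq (Ne.symm hxp) (Ne.symm hxq)
          rw [← h, hh]
        · left; rw [← h, hh]
      · -- horizontal pair (x, y) must meet vertical pair (q, p)
        rcases hmeet q hqA p hpA x hx y hyA hpq heqv hyx h with hh | hh | hh | hh
        · exact absurd hh.symm hxq
        · -- q = y : then q, u, x are three points on the horizontal line of q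
          exfalso
          refine no_three_aux (hfin2 q.2) (h2 q.2) (p := q) (q := u) (r := x)
            ⟨hqA, rfl⟩ ⟨huA, heqh⟩ ⟨hx, ?_⟩ (Ne.symm huq) (Ne.symm hxq) (Ne.symm hxu)
          rw [← h, ← hh]
        · exact absurd hh.symm hxp
        · right; rw [← h, ← hh]
    rcases claim v hvA hvp hvq hvu with hc1 | hc1 <;>
      rcases claim w hwA hwp hwq hwu with hc2 | hc2
    · -- u, v, w all on the vertical line of u
      exact no_three_aux (vfin u.1) (h1 u.1) (p := u) (q := v) (r := w)
        ⟨huA, rfl⟩ ⟨hvA, hc1⟩ ⟨hwA, hc2⟩ (Ne.symm hvu) (Ne.symm hwu) hvw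
    · -- disjoint pairs (u, v) vertical and (p, w) horizontal
      exact hno ⟨u, huA, v, hvA, p, hpA, w, hwA, hvu, hc1, hwp, hc2,
        Ne.symm hpu, hwu.symm, hvp, hvw⟩
    · -- disjoint pairs (u, w) vertical and (p, v) horizontal
      exact hno ⟨u, huA, w, hwA, p, hpA, v, hvA, hwu, hc2, hvp, hc1,
        Ne.symm hpu, hvu.symm, hwp, hvw.symm⟩
    · -- p, v, w all on the horizontal line of p
      exact no_three_aux (hfin2 p.2) (h2 p.2) (p := p) (q := v) (r := w)
        ⟨hpA, rfl⟩ ⟨hvA, hc1⟩ ⟨hwA, hc2⟩ (Ne.symm hvp) (Ne.symm hwp) hvw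
  -- conclude
  obtain ⟨p, hp, q, hq, r, hr, u, hu, hqp, heqv, hur, heqh, hpr, hpu, hqr, hqu⟩ := key
  refine ⟨p.1, r.2, ?_⟩
  have hsub : ({p, q, r, u} : Set (S × T)) ⊆ {x ∈ A | x.1 = p.1 ∨ x.2 = r.2} := by
    intro x hx
    rcases hx with rfl | rfl | rfl | rfl
    · exact ⟨hp, Or.inl rfl⟩
    · exact ⟨hq, Or.inl heqv⟩
    · exact ⟨hr, Or.inr rfl⟩
    · exact ⟨hu, Or.inr heqh⟩
  have hcard : ({p, q, r, u} : Set (S × T)).ncard = 4 := by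
    rw [Set.ncard_insert_of_notMem (by simp [Ne.symm hqp, hpr, hpu])
        ((Set.finite_singleton u).insert r |>.insert q),
      Set.ncard_insert_of_notMem (by simp [hqr, hqu])
        ((Set.finite_singleton u).insert r),
      Set.ncard_insert_of_notMem (by simp [Ne.symm hur]) (Set.finite_singleton u),
      Set.ncard_singleton]
  calc 4 = ({p, q, r, u} : Set (S × T)).ncard := hcard.symm
    _ ≤ _ := Set.ncard_le_ncard hsub (hfin.subset (Set.sep_subset _ _))
end
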